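/- arXiv:0810.1206 — 7 statements merged into one kernel-verified Lean document; each statement's English description precedes it below -/
import Mathlib

section
/- Let q, p, α ∈ [1,∞] with p < α. Then (L^q,L^p)^α(G) = {O}, where O is the class of functions equal to 0 λ-almost everywhere; that is, every measurable f with ‖f‖_{q,p,α} < ∞ vanishes λ-a.e. -/
open MeasureTheory ENNReal NNReal Set Filter Topology Pointwise

variable {G : Type*} [Group G] [TopologicalSpace G] [IsTopologicalGroup G]
  [T2Space G] [LocallyCompactSpace G] [SigmaCompactSpace G]
  [MeasurableSpace G] [BorelSpace G]

/-- The norm `_B‖f‖_{q,p}`. -/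
noncomputable def blockNorm {E : Type*} [NormedAddCommGroup E]
    (μ : Measure G) (q p : ℝ≥0∞) (B : Set G) (f : G → E) : ℝ≥0∞ :=
  if p = ∞ then essSup (fun y => eLpNorm ((y • B).indicator f) q μ) μ
  else (∫⁻ y, eLpNorm ((y • B).indicator f) q μ ^ p.toReal ∂μ) ^ (1 / p.toReal)

/-- The norm `‖f‖^π_{q,p}` associated to a partition `π`. -/
noncomputable def partNorm {E : Type*} [NormedAddCommGroup E]
    (μ : Measure G) (q p : ℝ≥0∞) (π : Set (Set G)) (f : G → E) : ℝ≥0∞ :=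
  if p = ∞ then ⨆ A ∈ π, eLpNorm (A.indicator f) q μ
  else (∑' A : π, eLpNorm ((A : Set G).indicator f) q μ ^ p.toReal) ^ (1 / p.toReal)

/-- `π` is a `U`–`V` uniform partition of `G`. -/
def IsUniformPartition (π : Set (Set G)) (U V : Set G) : Prop :=
  π.Countable ∧ (∀ A ∈ π, MeasurableSet A) ∧ π.PairwiseDisjoint id ∧
    ⋃₀ π = univ ∧ ∀ A ∈ π, ∃ x ∈ A, x • U ⊆ A ∧ A ⊆ x • V

/-- The ball `B(x,r)` for the homogeneous norm `nm`. -/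
def gball (nm : G → ℝ) (x : G) (r : ℝ) : Set G := {y | nm (x⁻¹ * y) < r}

/-- The norm `‖f‖_{q,p,α}`. -/
noncomputable def alphaNorm {E : Type*} [NormedAddCommGroup E]
    (μ : Measure G) (nm : G → ℝ) (πr : ℝ → Set (Set G))
    (q p α : ℝ≥0∞) (f : G → E) : ℝ≥0∞ :=
  ⨆ (r : ℝ) (_ : 0 < r),
    μ (gball nm 1 r) ^ (α⁻¹.toReal - q⁻¹.toReal) * partNorm μ q p (πr r) f

/-- The decreasing rearrangement `f*`. -/
noncomputable def rearr (μ : Measure G) (f : G → ℂ) (t : ℝ≥0∞) : ℝ≥0∞ :=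
  sInf {s : ℝ≥0∞ | 0 < s ∧ μ {x | s < (‖f x‖₊ : ℝ≥0∞)} ≤ t}

/-- The weak Lorentz quasinorm `‖f‖*_{α,∞}`. -/
noncomputable def weakNorm (μ : Measure G) (α : ℝ≥0∞) (f : G → ℂ) : ℝ≥0∞ :=
  ⨆ (t : ℝ≥0∞) (_ : 0 < t) (_ : t ≠ ∞), t ^ α⁻¹.toReal * rearr μ f t

/-! ### Auxiliary lemmas -/

private lemma aux_rpow_ne_zero {x : ℝ≥0∞} (h1 : x ≠ 0) (h2 : x ≠ ∞) (y : ℝ) : x ^ y ≠ 0 := by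
  simp [ENNReal.rpow_eq_zero_iff, h1, h2]

private lemma aux_rpow_ne_top {x : ℝ≥0∞} (h1 : x ≠ 0) (h2 : x ≠ ∞) (y : ℝ) : x ^ y ≠ ∞ := by
  simp [ENNReal.rpow_eq_top_iff, h1, h2]

private lemma aux_partNorm_congr {μ : Measure G} {q p : ℝ≥0∞} {π : Set (Set G)} {f g : G → ℂ}
    (h : f =ᵐ[μ] g) : partNorm μ q p π f = partNorm μ q p π g := by
  have key : ∀ A : Set G, eLpNorm (A.indicator f) q μ = eLpNorm (A.indicator g) q μ := by
    intro A
    refine eLpNorm_congr_ae (h.mono fun x hx => ?_)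
    by_cases hxA : x ∈ A
    · rw [Set.indicator_of_mem hxA, Set.indicator_of_mem hxA, hx]
    · rw [Set.indicator_of_notMem hxA, Set.indicator_of_notMem hxA]
  unfold partNorm
  split
  · exact iSup_congr fun A => iSup_congr fun _ => key A
  · rw [tsum_congr fun A => by rw [key (A : Set G)]]

private lemma aux_alphaNorm_congr {μ : Measure G} {nm : G → ℝ} {πr : ℝ → Set (Set G)}
    {q p α : ℝ≥0∞} {f g : G → ℂ} (h : f =ᵐ[μ] g) :
    alphaNorm μ nm πr q p α f = alphaNorm μ nm πr q p α g := by
  unfold alphaNorm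
  exact iSup_congr fun r => iSup_congr fun _ => by rw [aux_partNorm_congr h]

set_option maxHeartbeats 1000000 in
theorem statement10
    (μ : Measure G) [μ.IsHaarMeasure]
    (nm : G → ℝ) (γ ρ : ℝ)
    (hnm_cont : Continuous nm)
    (hnm_nonneg : ∀ x : G, 0 ≤ nm x)
    (hnm_zero : ∀ x : G, nm x = 0 ↔ x = 1)
    (hnm_inv : ∀ x : G, nm x⁻¹ = nm x)
    (hγ : 1 ≤ γ)
    (hnm_mul : ∀ x y : G, nm (x * y) ≤ γ * (nm x + nm y))
    (hball_cpt : ∀ (x : G) (r : ℝ), 0 < r → IsCompact (closure (gball nm x r)))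
    (hρ : 0 < ρ)
    (hvol : ∀ r : ℝ, 0 < r → μ (gball nm 1 r) = ENNReal.ofReal (r ^ ρ))
    (πr : ℝ → Set (Set G))
    (hπr : ∀ r : ℝ, 0 < r → IsUniformPartition (πr r)
      (gball nm 1 (r / (4 * γ ^ 2)))
      (gball nm 1 (r / (4 * γ ^ 2)) * gball nm 1 (r / (4 * γ ^ 2))))
   (q p α : ℝ≥0∞) (hq1 : 1 ≤ q) (hp1 : 1 ≤ p) (hpα : p < α) :
    ∀ f : G → ℂ, AEStronglyMeasurable f μ →
      alphaNorm μ nm πr q p α f < ∞ → f =ᵐ[μ] 0 := by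
  intro f hf hfin
  have hγ0 : (0:ℝ) < γ := lt_of_lt_of_le one_pos hγ
  -- replace f by a strongly measurable representative g
  set g := hf.mk f with hgdef
  have hgm : StronglyMeasurable g := hf.stronglyMeasurable_mk
  have hfg : f =ᵐ[μ] g := hf.ae_eq_mk
  rw [aux_alphaNorm_congr hfg] at hfin
  suffices hg0 : g =ᵐ[μ] 0 from hfg.trans hg0
  by_contra hne
  -- membership in balls
  have hmemg : ∀ (t : ℝ) (y : G), y ∈ gball nm 1 t ↔ nm y < t := by
    intro t y; simp [gball]
  have hgball_meas : ∀ t : ℝ, MeasurableSet (gball nm 1 t) := by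
    intro t
    have : IsOpen (gball nm 1 t) := by
      have : gball nm 1 t = (fun y => nm (1⁻¹ * y)) ⁻¹' Iio t := rfl
      rw [this]
      exact (hnm_cont.comp (continuous_const.mul continuous_id)).isOpen_preimage _ isOpen_Iio
    exact this.measurableSet
  -- find a positive-measure set where ‖g‖ is bounded below, inside a compact
  obtain ⟨n, hn⟩ : ∃ n : ℕ, μ ({x | ((n : ℝ) + 1)⁻¹ < ‖g x‖} ∩ compactCovering G n) ≠ 0 := by
    by_contra hall
    push_neg at hall
    apply hne
    have hsub : {x | g x ≠ 0} ⊆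
        ⋃ n : ℕ, ({x | ((n : ℝ) + 1)⁻¹ < ‖g x‖} ∩ compactCovering G n) := by
      intro x hx
      have h0 : 0 < ‖g x‖ := norm_pos_iff.mpr hx
      obtain ⟨n1, hn1⟩ := exists_nat_gt (‖g x‖)⁻¹
      obtain ⟨n2, hn2⟩ := exists_mem_compactCovering x
      refine mem_iUnion.mpr ⟨max n1 n2, ⟨?_, compactCovering_subset G (le_max_right _ _) hn2⟩⟩
      have h1 : (‖g x‖)⁻¹ < ((max n1 n2 : ℕ) : ℝ) + 1 := by
        have h2 : (n1 : ℝ) ≤ ((max n1 n2 : ℕ) : ℝ) := by exact_mod_cast le_max_left n1 n2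
        linarith
      have := (inv_strictAnti₀ (by positivity) h1)
      rwa [inv_inv] at this
    have : μ {x | g x ≠ 0} = 0 :=
      measure_mono_null hsub (measure_iUnion_null fun n => hall n)
    rwa [Filter.EventuallyEq, ae_iff]
  set c : ℝ := ((n : ℝ) + 1)⁻¹ with hcdef
  have hc : 0 < c := by positivity
  set K : Set G := compactCovering G n with hKdef
  have hKcpt : IsCompact K := isCompact_compactCovering G n
  set A : Set G := {x | c < ‖g x‖} ∩ K with hAdef
  have hAm : MeasurableSet A :=
    (measurableSet_lt measurable_const hgm.norm.measurable).inter hKcpt.isClosed.measurableSet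
  have hA0 : μ A ≠ 0 := hn
  have hAtop : μ A ≠ ∞ := (lt_of_le_of_lt (measure_mono inter_subset_right)
    hKcpt.measure_lt_top).ne
  -- exponents
  have hq0 : q ≠ 0 := (lt_of_lt_of_le zero_lt_one hq1).ne'
  have hp0 : p ≠ 0 := (lt_of_lt_of_le zero_lt_one hp1).ne'
  have hp_top : p ≠ ∞ := hpα.ne_top
  set pR : ℝ := p.toReal with hpRdef
  have hpR1 : 1 ≤ pR := by
    rw [hpRdef, ← ENNReal.toReal_one]
    exact ENNReal.toReal_mono hp_top hp1
  have hpRpos : 0 < pR := lt_of_lt_of_le one_pos hpR1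
  set κ : ℝ := q⁻¹.toReal with hκdef
  have hκ0 : 0 ≤ κ := ENNReal.toReal_nonneg
  have hκq : κ = 1 / q.toReal := by rw [hκdef, ENNReal.toReal_inv, one_div]
  set aκ : ℝ := α⁻¹.toReal with haκdef
  have haκ0 : 0 ≤ aκ := ENNReal.toReal_nonneg
  have hεpos : aκ < 1 / pR := by
    have h1 : α⁻¹ < p⁻¹ := ENNReal.inv_lt_inv.mpr hpα
    have h2 : p⁻¹ ≠ ∞ := ENNReal.inv_ne_top.mpr hp0
    have h3 : aκ < p⁻¹.toReal := by
      rw [haκdef]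
      exact (ENNReal.toReal_lt_toReal (ne_top_of_lt h1) h2).mpr h1
    rw [ENNReal.toReal_inv] at h3
    rw [one_div]
    exact h3
  set θ : ℝ := κ * pR with hθdef
  have hθ0 : 0 ≤ θ := mul_nonneg hκ0 hpRpos.le
  -- basic constants
  set cE : ℝ≥0∞ := ENNReal.ofReal c with hcEdef
  have hcE0 : cE ≠ 0 := by simp [hcEdef, hc]
  have hcEtop : cE ≠ ∞ := ENNReal.ofReal_ne_top
  set c4ρ : ℝ≥0∞ := ENNReal.ofReal ((4 * γ ^ 2)⁻¹) ^ ρ with hc4def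
  have hc40 : c4ρ ≠ 0 := aux_rpow_ne_zero (by simp; positivity) ENNReal.ofReal_ne_top ρ
  have hc4top : c4ρ ≠ ∞ := aux_rpow_ne_top (by simp; positivity) ENNReal.ofReal_ne_top ρ
  set Kc : Set G := K * closure (gball nm 1 (2 * γ)) with hKcdef
  have hKc_cpt : IsCompact Kc := hKcpt.mul (hball_cpt 1 (2 * γ) (by positivity))
  set Cμ : ℝ≥0∞ := μ Kc with hCμdef
  have hCμtop : Cμ ≠ ∞ := hKc_cpt.measure_lt_top.ne
  have hCμ0 : Cμ ≠ 0 := by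
    have hsub : K ⊆ Kc := by
      intro k hk
      refine ⟨k, hk, 1, subset_closure ?_, mul_one k⟩
      rw [hmemg]
      rw [(hnm_zero 1).mpr rfl]
      positivity
    have : μ A ≤ μ Kc := measure_mono (inter_subset_right.trans hsub)
    exact fun h => hA0 (le_antisymm (h ▸ this) zero_le)
  -- per-r facts
  have hballsub : ∀ r : ℝ, 0 < r →
      gball nm 1 (r / (4 * γ ^ 2)) * gball nm 1 (r / (4 * γ ^ 2)) ⊆ gball nm 1 (r / (2 * γ)) := by
    intro r hr z hz
    rw [Set.mem_mul] at hz
    obtain ⟨u, hu, v, hv, rfl⟩ := hz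
    rw [hmemg] at hu hv ⊢
    have := hnm_mul u v
    have h2 : γ * (nm u + nm v) < γ * (r / (4 * γ ^ 2) + r / (4 * γ ^ 2)) := by
      apply mul_lt_mul_of_pos_left _ hγ0
      exact add_lt_add hu hv
    have h3 : γ * (r / (4 * γ ^ 2) + r / (4 * γ ^ 2)) = r / (2 * γ) := by
      field_simp
      ring
    linarith
  have hupper : ∀ r : ℝ, 0 < r → ∀ E ∈ πr r, μ E ≤ (ENNReal.ofReal r) ^ ρ := by
    intro r hr E hE
    obtain ⟨_, _, _, _, hblocks⟩ := hπr r hr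
    obtain ⟨x, hxE, hxU, hxV⟩ := hblocks E hE
    have h1 : E ⊆ x • gball nm 1 (r / (2 * γ)) :=
      hxV.trans (smul_set_mono (hballsub r hr))
    calc μ E ≤ μ (x • gball nm 1 (r / (2 * γ))) := measure_mono h1
      _ = μ (gball nm 1 (r / (2 * γ))) := measure_smul μ x _
      _ = ENNReal.ofReal ((r / (2 * γ)) ^ ρ) := hvol _ (by positivity)
      _ ≤ ENNReal.ofReal (r ^ ρ) := by
          apply ENNReal.ofReal_le_ofReal
          apply Real.rpow_le_rpow (by positivity) _ hρ.le
          apply div_le_self hr.le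
          linarith
      _ = (ENNReal.ofReal r) ^ ρ := (ENNReal.ofReal_rpow_of_pos hr).symm
  have hlowerE : ∀ r : ℝ, 0 < r → ∀ E ∈ πr r, (ENNReal.ofReal r) ^ ρ * c4ρ ≤ μ E := by
    intro r hr E hE
    obtain ⟨_, _, _, _, hblocks⟩ := hπr r hr
    obtain ⟨x, hxE, hxU, hxV⟩ := hblocks E hE
    have h1 : (ENNReal.ofReal r) ^ ρ * c4ρ = ENNReal.ofReal ((r / (4 * γ ^ 2)) ^ ρ) := by
      rw [hc4def, ← ENNReal.mul_rpow_of_nonneg _ _ hρ.le, ← ENNReal.ofReal_mul hr.le,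
        ENNReal.ofReal_rpow_of_pos (by positivity)]
      rw [div_eq_mul_inv]
    rw [h1]
    calc ENNReal.ofReal ((r / (4 * γ ^ 2)) ^ ρ) = μ (gball nm 1 (r / (4 * γ ^ 2))) :=
          (hvol _ (by positivity)).symm
      _ = μ (x • gball nm 1 (r / (4 * γ ^ 2))) := (measure_smul μ x _).symm
      _ ≤ μ E := measure_mono hxU
  have hsubKc : ∀ r : ℝ, 0 < r → r ≤ 1 → ∀ E ∈ πr r, (A ∩ E).Nonempty → E ⊆ Kc := by
    intro r hr hr1 E hE hne'
    obtain ⟨_, _, _, _, hblocks⟩ := hπr r hr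
    obtain ⟨x, hxE, hxU, hxV⟩ := hblocks E hE
    obtain ⟨k, hk⟩ := hne'
    intro y hy
    have hky : x⁻¹ * y ∈ gball nm 1 (r / (2 * γ)) := by
      have := hballsub r hr (mem_smul_set_iff_inv_smul_mem.mp (hxV hy))
      simpa using this
    have hkk : x⁻¹ * k ∈ gball nm 1 (r / (2 * γ)) := by
      have := hballsub r hr (mem_smul_set_iff_inv_smul_mem.mp (hxV hk.2))
      simpa using this
    rw [hmemg] at hky hkk
    have hr2γ : r / (2 * γ) ≤ 1 := by
      rw [div_le_one (by positivity)]
      linarith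
    have hbound : nm (k⁻¹ * y) < 2 * γ := by
      have heq : k⁻¹ * y = (x⁻¹ * k)⁻¹ * (x⁻¹ * y) := by group
      rw [heq]
      have h1 := hnm_mul (x⁻¹ * k)⁻¹ (x⁻¹ * y)
      rw [hnm_inv] at h1
      have h2 : nm (x⁻¹ * k) + nm (x⁻¹ * y) < 2 := by
        have a1 : nm (x⁻¹ * k) < 1 := lt_of_lt_of_le hkk hr2γ
        have a2 : nm (x⁻¹ * y) < 1 := lt_of_lt_of_le hky hr2γ
        linarith
      calc nm ((x⁻¹ * k)⁻¹ * (x⁻¹ * y)) ≤ γ * (nm (x⁻¹ * k) + nm (x⁻¹ * y)) := h1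
        _ < γ * 2 := by
            apply mul_lt_mul_of_pos_left h2 hγ0
        _ = 2 * γ := by ring
    have hkA : k ∈ ({x | c < ‖g x‖} ∩ K) := hk.1
    refine ⟨k, hkA.2, k⁻¹ * y, subset_closure ((hmemg _ _).mpr hbound), by group⟩
  have hblockLB : ∀ r : ℝ, 0 < r → ∀ E ∈ πr r, μ (A ∩ E) ≠ 0 →
      cE * μ (A ∩ E) ^ κ ≤ eLpNorm (E.indicator g) q μ := by
    intro r hr E hE hμ0
    obtain ⟨_, hmeas, _, _, _⟩ := hπr r hr
    have hAE : MeasurableSet (A ∩ E) := hAm.inter (hmeas E hE)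
    have hmono : eLpNorm ((A ∩ E).indicator fun _ => c) q μ ≤ eLpNorm (E.indicator g) q μ := by
      apply eLpNorm_mono
      intro x
      by_cases hx : x ∈ A ∩ E
      · rw [Set.indicator_of_mem hx, Set.indicator_of_mem hx.2]
        rw [Real.norm_eq_abs, abs_of_pos hc]
        have hxA : x ∈ ({x | c < ‖g x‖} ∩ K) := hx.1
        exact le_of_lt hxA.1
      · rw [Set.indicator_of_notMem hx, norm_zero]
        exact norm_nonneg _
    rw [eLpNorm_indicator_const' hAE hμ0 hq0] at hmono
    rw [Real.enorm_eq_ofReal hc.le] at hmono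
    rwa [hcEdef, hκq]
  have hterm : ∀ r : ℝ, 0 < r → ∀ E ∈ πr r, μ (A ∩ E) ≠ 0 →
      cE ^ pR * μ (A ∩ E) ^ θ ≤ eLpNorm (E.indicator g) q μ ^ pR := by
    intro r hr E hE hμ0
    have h1 := ENNReal.rpow_le_rpow (hblockLB r hr E hE hμ0) hpRpos.le
    have hAEtop : μ (A ∩ E) ≠ ∞ :=
      (lt_of_le_of_lt (measure_mono inter_subset_left) (lt_top_iff_ne_top.mpr hAtop)).ne
    have h2 : (cE * μ (A ∩ E) ^ κ) ^ pR = cE ^ pR * μ (A ∩ E) ^ θ := by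
      rw [ENNReal.mul_rpow_of_ne_top hcEtop (aux_rpow_ne_top hμ0 hAEtop κ),
        ← ENNReal.rpow_mul, hθdef]
    rwa [h2] at h1
  have hsum : ∀ r : ℝ, 0 < r →
      ∑' (E : Set G), (πr r).indicator (fun E => μ (A ∩ E)) E = μ A := by
    intro r hr
    obtain ⟨hcnt, hmeas, hdisj, hcover, _⟩ := hπr r hr
    rw [← tsum_subtype]
    have hd : (πr r).PairwiseDisjoint fun E => A ∩ E := by
      intro E hE F hF hEF
      exact (hdisj hE hF hEF).mono inter_subset_right inter_subset_right
    rw [← measure_biUnion hcnt hd fun E hE => hAm.inter (hmeas E hE)]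
    congr 1
    ext y
    simp only [mem_iUnion, exists_prop]
    constructor
    · rintro ⟨E, hE, hy⟩
      exact hy.1
    · intro hy
      have hy2 : y ∈ ⋃₀ πr r := by rw [hcover]; trivial
      obtain ⟨E, hE, hyE⟩ := hy2
      exact ⟨E, hE, hy, hyE⟩
  have hcount : ∀ r : ℝ, 0 < r → r ≤ 1 →
      ∑' (E : Set G), Set.indicator {E | E ∈ πr r ∧ μ (A ∩ E) ≠ 0}
        (fun _ => (1 : ℝ≥0∞)) E ≤ Cμ / ((ENNReal.ofReal r) ^ ρ * c4ρ) := by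
    intro r hr hr1
    obtain ⟨hcnt, hmeas, hdisj, hcover, _⟩ := hπr r hr
    set P : Set (Set G) := {E | E ∈ πr r ∧ μ (A ∩ E) ≠ 0} with hPdef
    have hPsub : P ⊆ πr r := fun E hE => hE.1
    set u : ℝ≥0∞ := (ENNReal.ofReal r) ^ ρ * c4ρ with hudef
    have hu0 : u ≠ 0 :=
      mul_ne_zero (aux_rpow_ne_zero (by simp [hr]) ENNReal.ofReal_ne_top ρ) hc40
    have hutop : u ≠ ∞ :=
      ENNReal.mul_ne_top (aux_rpow_ne_top (by simp [hr]) ENNReal.ofReal_ne_top ρ) hc4top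
    have h1 : ∑' (E : Set G), P.indicator (fun _ => (1 : ℝ≥0∞)) E = ∑' (_ : ↥P), (1 : ℝ≥0∞) :=
      (tsum_subtype P fun _ => (1 : ℝ≥0∞)).symm
    have h2 : u * ∑' (_ : ↥P), (1 : ℝ≥0∞) = ∑' (_ : ↥P), u := by
      rw [ENNReal.tsum_mul_left.symm]
      simp
    have h3 : ∑' (_ : ↥P), u ≤ ∑' (E : ↥P), μ (E : Set G) :=
      ENNReal.tsum_le_tsum fun E => hlowerE r hr E (hPsub E.2)
    have h4 : ∑' (E : ↥P), μ (E : Set G) = μ (⋃ E ∈ P, E) :=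
      (measure_biUnion (hcnt.mono hPsub) (hdisj.subset hPsub)
        fun E hE => hmeas E (hPsub hE)).symm
    have h5 : μ (⋃ E ∈ P, E) ≤ Cμ := by
      apply measure_mono
      apply iUnion₂_subset
      intro E hE
      exact hsubKc r hr hr1 E hE.1 (nonempty_of_measure_ne_zero hE.2)
    have h6 : u * ∑' (_ : ↥P), (1 : ℝ≥0∞) ≤ Cμ := by
      rw [h2]; exact h3.trans (h4.le.trans h5)
    rw [h1]
    rw [ENNReal.le_div_iff_mul_le (Or.inl hu0) (Or.inl hutop), mul_comm]
    exact h6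
  -- the main lower-bound on the partition sum
  obtain ⟨D, hD0, hDtop, hSUMlb⟩ :
      ∃ D : ℝ≥0∞, D ≠ 0 ∧ D ≠ ∞ ∧ ∀ r : ℝ, 0 < r → r ≤ 1 →
        D * ((ENNReal.ofReal r) ^ ρ) ^ (θ - 1) ≤
          ∑' (E : ↥(πr r)), eLpNorm ((E : Set G).indicator g) q μ ^ pR := by
    have hcEp0 : cE ^ pR ≠ 0 := aux_rpow_ne_zero hcE0 hcEtop pR
    have hcEptop : cE ^ pR ≠ ∞ := aux_rpow_ne_top hcE0 hcEtop pR
    rcases le_or_gt θ 1 with hθ1 | hθ1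
    · -- case θ ≤ 1
      refine ⟨cE ^ pR * μ A, mul_ne_zero hcEp0 hA0, ENNReal.mul_ne_top hcEptop hAtop, ?_⟩
      intro r hr hr1
      obtain ⟨hcnt, hmeas, hdisj, hcover, hblocks⟩ := hπr r hr
      set t : ℝ≥0∞ := ENNReal.ofReal r with htdef
      have ht0 : t ≠ 0 := by simp [htdef, hr]
      have httop : t ≠ ∞ := ENNReal.ofReal_ne_top
      have htρ0 : t ^ ρ ≠ 0 := aux_rpow_ne_zero ht0 httop ρ
      have htρtop : t ^ ρ ≠ ∞ := aux_rpow_ne_top ht0 httop ρ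
      rw [tsum_subtype (πr r) fun E => eLpNorm (E.indicator g) q μ ^ pR]
      have hptwise : ∀ E : Set G,
          cE ^ pR * ((t ^ ρ) ^ (θ - 1) * (πr r).indicator (fun E => μ (A ∩ E)) E) ≤
          (πr r).indicator (fun E => eLpNorm (E.indicator g) q μ ^ pR) E := by
        intro E
        by_cases hE : E ∈ πr r
        · rw [Set.indicator_of_mem hE, Set.indicator_of_mem hE]
          by_cases h0 : μ (A ∩ E) = 0
          · rw [h0]; simp
          · have hAEtop : μ (A ∩ E) ≠ ∞ :=
              (lt_of_le_of_lt (measure_mono inter_subset_left)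
                (lt_top_iff_ne_top.mpr hAtop)).ne
            have h4 : μ (A ∩ E) * (t ^ ρ) ^ (θ - 1) ≤ μ (A ∩ E) ^ θ := by
              have haE : μ (A ∩ E) ≤ t ^ ρ :=
                le_trans (measure_mono inter_subset_right) (hupper r hr E hE)
              have h5 : μ (A ∩ E) ^ (1 - θ) ≤ (t ^ ρ) ^ (1 - θ) :=
                ENNReal.rpow_le_rpow haE (by linarith)
              calc μ (A ∩ E) * (t ^ ρ) ^ (θ - 1)
                  = μ (A ∩ E) ^ θ * μ (A ∩ E) ^ (1 - θ) * (t ^ ρ) ^ (θ - 1) := by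
                    rw [← ENNReal.rpow_add θ (1 - θ) h0 hAEtop]
                    norm_num
                _ ≤ μ (A ∩ E) ^ θ * (t ^ ρ) ^ (1 - θ) * (t ^ ρ) ^ (θ - 1) := by
                    gcongr
                _ = μ (A ∩ E) ^ θ := by
                    rw [mul_assoc, ← ENNReal.rpow_add (1 - θ) (θ - 1) htρ0 htρtop]
                    norm_num
            calc cE ^ pR * ((t ^ ρ) ^ (θ - 1) * μ (A ∩ E))
                = cE ^ pR * (μ (A ∩ E) * (t ^ ρ) ^ (θ - 1)) := by ring
              _ ≤ cE ^ pR * μ (A ∩ E) ^ θ := by gcongr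
              _ ≤ eLpNorm (E.indicator g) q μ ^ pR := hterm r hr E hE h0
        · rw [Set.indicator_of_notMem hE, Set.indicator_of_notMem hE]
          simp
      calc cE ^ pR * μ A * (t ^ ρ) ^ (θ - 1)
          = cE ^ pR * ((t ^ ρ) ^ (θ - 1) * μ A) := by ring
        _ = cE ^ pR * ((t ^ ρ) ^ (θ - 1) *
              ∑' (E : Set G), (πr r).indicator (fun E => μ (A ∩ E)) E) := by
            rw [hsum r hr]
        _ = ∑' (E : Set G),
              cE ^ pR * ((t ^ ρ) ^ (θ - 1) * (πr r).indicator (fun E => μ (A ∩ E)) E) := by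
            rw [← ENNReal.tsum_mul_left, ← ENNReal.tsum_mul_left]
        _ ≤ ∑' (E : Set G), (πr r).indicator (fun E => eLpNorm (E.indicator g) q μ ^ pR) E :=
            ENNReal.tsum_le_tsum hptwise
    · -- case 1 < θ
      have hθpos : 0 < θ := lt_trans one_pos hθ1
      have hκpos : 0 < κ := by
        rcases lt_or_eq_of_le hκ0 with h | h
        · exact h
        · exfalso; rw [hθdef, ← h] at hθ1; simp at hθ1; linarith
      set Z0 : ℝ≥0∞ := Cμ ^ (θ - 1) * c4ρ ^ (-(θ - 1)) with hZ0def
      have hZ00 : Z0 ≠ 0 := mul_ne_zero (aux_rpow_ne_zero hCμ0 hCμtop _)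
        (aux_rpow_ne_zero hc40 hc4top _)
      have hZ0top : Z0 ≠ ∞ := ENNReal.mul_ne_top (aux_rpow_ne_top hCμ0 hCμtop _)
        (aux_rpow_ne_top hc40 hc4top _)
      refine ⟨cE ^ pR * (μ A ^ θ * Z0⁻¹), ?_, ?_, ?_⟩
      · exact mul_ne_zero hcEp0 (mul_ne_zero (aux_rpow_ne_zero hA0 hAtop θ)
          (ENNReal.inv_ne_zero.mpr hZ0top))
      · exact ENNReal.mul_ne_top hcEptop (ENNReal.mul_ne_top
          (aux_rpow_ne_top hA0 hAtop θ) (ENNReal.inv_ne_top.mpr hZ00))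
      intro r hr hr1
      obtain ⟨hcnt, hmeas, hdisj, hcover, hblocks⟩ := hπr r hr
      set t : ℝ≥0∞ := ENNReal.ofReal r with htdef
      have ht0 : t ≠ 0 := by simp [htdef, hr]
      have httop : t ≠ ∞ := ENNReal.ofReal_ne_top
      have htρ0 : t ^ ρ ≠ 0 := aux_rpow_ne_zero ht0 httop ρ
      have htρtop : t ^ ρ ≠ ∞ := aux_rpow_ne_top ht0 httop ρ
      -- Hölder inequality with the counting measure
      set P : Set (Set G) := {E | E ∈ πr r ∧ μ (A ∩ E) ≠ 0} with hPdef
      set Sθ : ℝ≥0∞ := ∑' (E : Set G), (πr r).indicator (fun E => μ (A ∩ E) ^ θ) E with hSθdef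
      have hconj : θ.HolderConjugate (Real.conjExponent θ) := Real.HolderConjugate.conjExponent hθ1
      set θc : ℝ := Real.conjExponent θ with hθcdef
      have hθcpos : 0 < θc := hconj.symm.pos
      have hHolder : μ A ≤ Sθ ^ (1 / θ) * (Cμ / (t ^ ρ * c4ρ)) ^ (1 / θc) := by
        letI : MeasurableSpace (Set G) := ⊤
        haveI : MeasurableSingletonClass (Set G) := ⟨fun _ => trivial⟩
        have hH := ENNReal.lintegral_mul_le_Lp_mul_Lq (Measure.count : Measure (Set G)) hconj
          (f := (πr r).indicator fun E => μ (A ∩ E))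
          (g := P.indicator fun _ => (1 : ℝ≥0∞))
          measurable_from_top.aemeasurable measurable_from_top.aemeasurable
        rw [lintegral_count, lintegral_count, lintegral_count] at hH
        have e1 : ∑' (E : Set G),
            ((πr r).indicator (fun E => μ (A ∩ E)) * P.indicator fun _ => (1 : ℝ≥0∞)) E
            = μ A := by
          rw [← hsum r hr]
          apply tsum_congr
          intro E
          simp only [Pi.mul_apply]
          by_cases hP : E ∈ P
          · rw [Set.indicator_of_mem hP, mul_one]
          · rw [Set.indicator_of_notMem hP, mul_zero]
            by_cases hE : E ∈ πr r
            · rw [Set.indicator_of_mem hE]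
              by_contra h
              exact hP ⟨hE, fun h0 => h h0.symm⟩
            · rw [Set.indicator_of_notMem hE]
        have e2 : ∑' (E : Set G), ((πr r).indicator (fun E => μ (A ∩ E)) E) ^ θ = Sθ := by
          rw [hSθdef]
          apply tsum_congr
          intro E
          by_cases hE : E ∈ πr r
          · rw [Set.indicator_of_mem hE, Set.indicator_of_mem hE]
          · rw [Set.indicator_of_notMem hE, Set.indicator_of_notMem hE,
              ENNReal.zero_rpow_of_pos hθpos]
        have e3 : ∑' (E : Set G), (P.indicator (fun _ => (1 : ℝ≥0∞)) E) ^ θc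
            = ∑' (E : Set G), P.indicator (fun _ => (1 : ℝ≥0∞)) E := by
          apply tsum_congr
          intro E
          by_cases hP : E ∈ P
          · rw [Set.indicator_of_mem hP, ENNReal.one_rpow]
          · rw [Set.indicator_of_notMem hP, ENNReal.zero_rpow_of_pos hθcpos]
        rw [e1, e2, e3] at hH
        refine hH.trans ?_
        gcongr
        · exact hcount r hr hr1
      -- from Hölder to the lower bound on Sθ
      have hNm : (Cμ / (t ^ ρ * c4ρ)) ^ (θ - 1) ≤ Z0 * ((t ^ ρ) ^ (θ - 1))⁻¹ := by
        have h1 : Cμ / (t ^ ρ * c4ρ) = Cμ * (t ^ ρ)⁻¹ * c4ρ⁻¹ := by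
          rw [div_eq_mul_inv, ENNReal.mul_inv (Or.inl htρ0) (Or.inl htρtop)]
          ring
        apply le_of_eq
        rw [h1]
        calc (Cμ * (t ^ ρ)⁻¹ * c4ρ⁻¹) ^ (θ - 1)
            = Cμ ^ (θ - 1) * ((t ^ ρ)⁻¹) ^ (θ - 1) * (c4ρ⁻¹) ^ (θ - 1) := by
              rw [ENNReal.mul_rpow_of_ne_top (ENNReal.mul_ne_top hCμtop
                (ENNReal.inv_ne_top.mpr htρ0)) (ENNReal.inv_ne_top.mpr hc40),
                ENNReal.mul_rpow_of_ne_top hCμtop (ENNReal.inv_ne_top.mpr htρ0)]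
          _ = Z0 * ((t ^ ρ) ^ (θ - 1))⁻¹ := by
              rw [ENNReal.inv_rpow, ENNReal.inv_rpow, hZ0def, ENNReal.rpow_neg]
              ring
      have hSθ : μ A ^ θ * Z0⁻¹ * (t ^ ρ) ^ (θ - 1) ≤ Sθ := by
        have h1 : μ A ^ θ ≤ Sθ * (Cμ / (t ^ ρ * c4ρ)) ^ (θ - 1) := by
          have h2 := ENNReal.rpow_le_rpow hHolder hθpos.le
          rw [ENNReal.mul_rpow_of_nonneg _ _ hθpos.le, ← ENNReal.rpow_mul,
            ← ENNReal.rpow_mul] at h2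
          rw [one_div_mul_cancel hθpos.ne', ENNReal.rpow_one] at h2
          have h3 : 1 / θc * θ = θ - 1 := by
            have := hconj.inv_add_inv_eq_one
            field_simp at this ⊢
            nlinarith [hconj.symm.pos, hθpos]
          rwa [h3] at h2
        have h4 : μ A ^ θ ≤ Sθ * (Z0 * ((t ^ ρ) ^ (θ - 1))⁻¹) :=
          h1.trans (mul_le_mul_right hNm Sθ)
        have htθ0 : (t ^ ρ) ^ (θ - 1) ≠ 0 := aux_rpow_ne_zero htρ0 htρtop _
        have htθtop : (t ^ ρ) ^ (θ - 1) ≠ ∞ := aux_rpow_ne_top htρ0 htρtop _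
        calc μ A ^ θ * Z0⁻¹ * (t ^ ρ) ^ (θ - 1)
            ≤ Sθ * (Z0 * ((t ^ ρ) ^ (θ - 1))⁻¹) * Z0⁻¹ * (t ^ ρ) ^ (θ - 1) := by gcongr
          _ = Sθ * (Z0 * Z0⁻¹) * (((t ^ ρ) ^ (θ - 1))⁻¹ * (t ^ ρ) ^ (θ - 1)) := by ring
          _ = Sθ := by
              rw [ENNReal.mul_inv_cancel hZ00 hZ0top,
                ENNReal.inv_mul_cancel htθ0 htθtop, mul_one, mul_one]
      -- conclude
      rw [tsum_subtype (πr r) fun E => eLpNorm (E.indicator g) q μ ^ pR]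
      have hptwise : ∀ E : Set G,
          cE ^ pR * (πr r).indicator (fun E => μ (A ∩ E) ^ θ) E ≤
          (πr r).indicator (fun E => eLpNorm (E.indicator g) q μ ^ pR) E := by
        intro E
        by_cases hE : E ∈ πr r
        · rw [Set.indicator_of_mem hE, Set.indicator_of_mem hE]
          by_cases h0 : μ (A ∩ E) = 0
          · rw [h0, ENNReal.zero_rpow_of_pos hθpos]; simp
          · exact hterm r hr E hE h0
        · rw [Set.indicator_of_notMem hE, Set.indicator_of_notMem hE]
          simp
      calc cE ^ pR * (μ A ^ θ * Z0⁻¹) * (t ^ ρ) ^ (θ - 1)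
          = cE ^ pR * (μ A ^ θ * Z0⁻¹ * (t ^ ρ) ^ (θ - 1)) := by ring
        _ ≤ cE ^ pR * Sθ := by gcongr
        _ = ∑' (E : Set G), cE ^ pR * (πr r).indicator (fun E => μ (A ∩ E) ^ θ) E := by
            rw [ENNReal.tsum_mul_left]
        _ ≤ ∑' (E : Set G), (πr r).indicator (fun E => eLpNorm (E.indicator g) q μ ^ pR) E :=
            ENNReal.tsum_le_tsum hptwise
  -- from the sum lower-bound to a lower bound on alphaNorm
  set L : ℝ≥0∞ := alphaNorm μ nm πr q p α g with hLdef
  set ε' : ℝ := ρ * (1 / pR - aκ) with hε'def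
  have hε'pos : 0 < ε' := mul_pos hρ (by linarith)
  set K0 : ℝ≥0∞ := D ^ (1 / pR) with hK0def
  have hK00 : K0 ≠ 0 := aux_rpow_ne_zero hD0 hDtop _
  have hK0top : K0 ≠ ∞ := aux_rpow_ne_top hD0 hDtop _
  have hkey : ∀ r : ℝ, 0 < r → r ≤ 1 → K0 * (ENNReal.ofReal r) ^ (-ε') ≤ L := by
    intro r hr hr1
    set t : ℝ≥0∞ := ENNReal.ofReal r with htdef
    have ht0 : t ≠ 0 := by simp [htdef, hr]
    have httop : t ≠ ∞ := ENNReal.ofReal_ne_top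
    have htρ0 : t ^ ρ ≠ 0 := aux_rpow_ne_zero ht0 httop ρ
    have htρtop : t ^ ρ ≠ ∞ := aux_rpow_ne_top ht0 httop ρ
    have halpha : μ (gball nm 1 r) ^ (aκ - κ) * partNorm μ q p (πr r) g ≤ L := by
      rw [hLdef]
      exact le_iSup₂_of_le r hr le_rfl
    have h1 : partNorm μ q p (πr r) g =
        (∑' (E : ↥(πr r)), eLpNorm ((E : Set G).indicator g) q μ ^ pR) ^ (1 / pR) := by
      rw [partNorm, if_neg hp_top]
    have h2 : (D * (t ^ ρ) ^ (θ - 1)) ^ (1 / pR) ≤ partNorm μ q p (πr r) g := by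
      rw [h1]
      exact ENNReal.rpow_le_rpow (hSUMlb r hr hr1) (by positivity)
    have h3 : (D * (t ^ ρ) ^ (θ - 1)) ^ (1 / pR) =
        K0 * (t ^ ρ) ^ ((θ - 1) * (1 / pR)) := by
      rw [ENNReal.mul_rpow_of_ne_top hDtop (aux_rpow_ne_top htρ0 htρtop _),
        ← ENNReal.rpow_mul, hK0def]
    have h4 : μ (gball nm 1 r) ^ (aκ - κ) = (t ^ ρ) ^ (aκ - κ) := by
      rw [hvol r hr, ← ENNReal.ofReal_rpow_of_pos hr]
    have h5 : (t ^ ρ) ^ (aκ - κ) * (K0 * (t ^ ρ) ^ ((θ - 1) * (1 / pR))) =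
        K0 * t ^ (-ε') := by
      rw [mul_comm ((t ^ ρ) ^ (aκ - κ)) _, mul_assoc,
        ← ENNReal.rpow_add _ _ htρ0 htρtop, ← ENNReal.rpow_mul]
      congr 1
      rw [hε'def, hθdef]
      field_simp
      ring
    calc K0 * t ^ (-ε') = (t ^ ρ) ^ (aκ - κ) * (K0 * (t ^ ρ) ^ ((θ - 1) * (1 / pR))) := h5.symm
      _ ≤ (t ^ ρ) ^ (aκ - κ) * partNorm μ q p (πr r) g := by
          rw [← h3]; gcongr
      _ = μ (gball nm 1 r) ^ (aκ - κ) * partNorm μ q p (πr r) g := by rw [h4]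
      _ ≤ L := halpha
  -- contradiction
  have hLtop : L ≠ ∞ := hfin.ne
  set base : ℝ≥0∞ := L / K0 + 1 with hbasedef
  have hbase1 : 1 ≤ base := le_add_self
  have hbase0 : base ≠ 0 := by
    intro h; rw [h] at hbase1; simp at hbase1
  have hbasetop : base ≠ ∞ :=
    ENNReal.add_ne_top.mpr ⟨(ENNReal.div_lt_top hLtop hK00).ne, ENNReal.one_ne_top⟩
  set η : ℝ≥0∞ := base ^ (-(1 / ε')) with hηdef
  have hη0 : η ≠ 0 := aux_rpow_ne_zero hbase0 hbasetop _
  have hηtop : η ≠ ∞ := aux_rpow_ne_top hbase0 hbasetop _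
  have hη1 : η ≤ 1 := by
    rw [hηdef, ENNReal.rpow_neg, ENNReal.inv_le_one]
    calc (1 : ℝ≥0∞) = 1 ^ (1 / ε') := (ENNReal.one_rpow _).symm
      _ ≤ base ^ (1 / ε') := ENNReal.rpow_le_rpow hbase1 (by positivity)
  set r0 : ℝ := η.toReal / 2 with hr0def
  have hηRpos : 0 < η.toReal := ENNReal.toReal_pos hη0 hηtop
  have hr00 : 0 < r0 := by positivity
  have hr01 : r0 ≤ 1 := by
    have : η.toReal ≤ 1 := by
      rw [← ENNReal.toReal_one]
      exact ENNReal.toReal_mono ENNReal.one_ne_top hη1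
    linarith
  have ht : ENNReal.ofReal r0 < η := by
    rw [← ENNReal.ofReal_toReal hηtop]
    rw [ENNReal.ofReal_lt_ofReal_iff hηRpos]
    linarith
  have hstep1 : η ^ (-ε') < (ENNReal.ofReal r0) ^ (-ε') := by
    rw [ENNReal.rpow_neg, ENNReal.rpow_neg]
    exact ENNReal.inv_lt_inv.mpr (ENNReal.rpow_lt_rpow ht hε'pos)
  have hstep2 : η ^ (-ε') = base := by
    rw [hηdef, ← ENNReal.rpow_mul]
    have : -(1 / ε') * -ε' = 1 := by field_simp
    rw [this, ENNReal.rpow_one]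
  have hstep3 : K0 * base = L + K0 := by
    rw [hbasedef, mul_add, mul_one, ENNReal.mul_div_cancel hK00 hK0top]
  have hfinal : L < K0 * (ENNReal.ofReal r0) ^ (-ε') := by
    calc L < L + K0 := ENNReal.lt_add_right hLtop hK00
      _ = K0 * base := hstep3.symm
      _ = K0 * η ^ (-ε') := by rw [hstep2]
      _ < K0 * (ENNReal.ofReal r0) ^ (-ε') :=
          (ENNReal.mul_lt_mul_iff_right hK00 hK0top).mpr hstep1
  exact absurd (hkey r0 hr00 hr01) (not_le.mpr hfinal)
end

section
/- Let (q₁,p₁,α₁) and (q₂,p₂,α₂) be elements of [1,∞]³ with q₁ ≤ α₁ and q₂ ≤ α₂, and let q, p, α be defined by 1/q = 1/q₁ + 1/q₂ ≤ 1, 1/p = 1/p₁ + 1/p₂ ≤ 1 and 1/α = 1/α₁ + 1/α₂. Then for all measurable functions f and g on G: ‖f·g‖_{q,p,α} ≤ ‖f‖_{q₁,p₁,α₁} · ‖g‖_{q₂,p₂,α₂}. -/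
open MeasureTheory ENNReal NNReal Set Filter Topology Pointwise

variable {G : Type*} [Group G] [TopologicalSpace G] [IsTopologicalGroup G]
  [T2Space G] [LocallyCompactSpace G] [SigmaCompactSpace G]
  [MeasurableSpace G] [BorelSpace G]

lemma tsum_mul_le_Lp_mul_Lq' {ι : Type*} (a b : ι → ℝ≥0∞) {s t : ℝ}
    (hst : s.HolderConjugate t) :
    ∑' i, a i * b i ≤ (∑' i, a i ^ s) ^ (1/s) * (∑' i, b i ^ t) ^ (1/t) := by
  letI : MeasurableSpace ι := ⊤
  calc ∑' i, a i * b i = ∫⁻ i, (a * b) i ∂Measure.count :=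
        (lintegral_count' measurable_from_top).symm
    _ ≤ (∫⁻ i, a i ^ s ∂Measure.count) ^ (1/s) * (∫⁻ i, b i ^ t ∂Measure.count) ^ (1/t) :=
        ENNReal.lintegral_mul_le_Lp_mul_Lq _ hst measurable_from_top.aemeasurable
          measurable_from_top.aemeasurable
    _ = _ := by rw [lintegral_count' measurable_from_top, lintegral_count' measurable_from_top]

lemma lp_holder {ι : Type*} (a b : ι → ℝ≥0∞) {p₁ p₂ p : ℝ≥0∞}
    (hp₁ : 1 ≤ p₁) (hp₂ : 1 ≤ p₂) (hp₁t : p₁ ≠ ∞) (hp₂t : p₂ ≠ ∞)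
    (hp : 1 / p₁ + 1 / p₂ = 1 / p) :
    (∑' i, (a i * b i) ^ p.toReal) ^ (1 / p.toReal) ≤
      (∑' i, a i ^ p₁.toReal) ^ (1 / p₁.toReal) * (∑' i, b i ^ p₂.toReal) ^ (1 / p₂.toReal) := by
  simp only [one_div] at hp
  set A := p₁.toReal with hAdef
  set B := p₂.toReal with hBdef
  set P := p.toReal with hPdef
  have hA1 : 1 ≤ A := by
    rw [hAdef, ← ENNReal.toReal_one]; exact ENNReal.toReal_mono hp₁t hp₁
  have hB1 : 1 ≤ B := by
    rw [hBdef, ← ENNReal.toReal_one]; exact ENNReal.toReal_mono hp₂t hp₂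
  have hA0 : 0 < A := lt_of_lt_of_le zero_lt_one hA1
  have hB0 : 0 < B := lt_of_lt_of_le zero_lt_one hB1
  have hrel : P⁻¹ = A⁻¹ + B⁻¹ := by
    have h := congrArg ENNReal.toReal hp
    rw [ENNReal.toReal_add (ENNReal.inv_ne_top.mpr (by positivity))
      (ENNReal.inv_ne_top.mpr (by positivity)), ENNReal.toReal_inv, ENNReal.toReal_inv,
      ENNReal.toReal_inv] at h
    exact h.symm
  have hP0 : 0 < P := by rw [← inv_pos, hrel]; positivity
  have hrel2 : P * B + P * A = A * B := by
    have h := hrel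
    field_simp at h
    linarith
  have hPA : P < A := by
    have h1 : A⁻¹ < P⁻¹ := by rw [hrel]; linarith [inv_pos.mpr hB0]
    exact (inv_lt_inv₀ hA0 hP0).mp h1
  have hPB : P < B := by
    have h1 : B⁻¹ < P⁻¹ := by rw [hrel]; linarith [inv_pos.mpr hA0]
    exact (inv_lt_inv₀ hB0 hP0).mp h1
  set e₁ := A / P with he₁
  set e₂ := B / P with he₂
  have he₁0 : 0 < e₁ := div_pos hA0 hP0
  have he₂0 : 0 < e₂ := div_pos hB0 hP0
  have hconj : e₁.HolderConjugate e₂ := by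
    rw [Real.holderConjugate_iff]
    constructor
    · rw [he₁]; exact (one_lt_div hP0).mpr hPA
    · rw [he₁, he₂]; field_simp; linarith [hrel2]
  have hPe₁ : P * e₁ = A := by rw [he₁]; field_simp
  have hPe₂ : P * e₂ = B := by rw [he₂]; field_simp
  have hx : ∀ i, (a i ^ P) ^ e₁ = a i ^ A := fun i => by rw [← ENNReal.rpow_mul, hPe₁]
  have hy : ∀ i, (b i ^ P) ^ e₂ = b i ^ B := fun i => by rw [← ENNReal.rpow_mul, hPe₂]
  have hexp1 : 1/e₁ * (1/P) = 1/A := by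
    rw [div_mul_div_comm, one_mul, ← hPe₁, mul_comm]
  have hexp2 : 1/e₂ * (1/P) = 1/B := by
    rw [div_mul_div_comm, one_mul, ← hPe₂, mul_comm]
  calc (∑' i, (a i * b i) ^ P) ^ (1/P)
      = (∑' i, a i ^ P * b i ^ P) ^ (1/P) := by
        congr 1; exact tsum_congr fun i => ENNReal.mul_rpow_of_nonneg _ _ hP0.le
    _ ≤ ((∑' i, (a i ^ P) ^ e₁) ^ (1/e₁) * (∑' i, (b i ^ P) ^ e₂) ^ (1/e₂)) ^ (1/P) :=
        ENNReal.rpow_le_rpow (tsum_mul_le_Lp_mul_Lq' _ _ hconj) (by positivity)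
    _ = (∑' i, a i ^ A) ^ (1/A) * (∑' i, b i ^ B) ^ (1/B) := by
        simp only [hx, hy]
        rw [ENNReal.mul_rpow_of_nonneg _ _ (by positivity : (0:ℝ) ≤ 1/P),
          ← ENNReal.rpow_mul, ← ENNReal.rpow_mul, hexp1, hexp2]

lemma partNorm_mul_le (μ : Measure G) (π : Set (Set G))
    (hπm : ∀ A ∈ π, MeasurableSet A)
    (q₁ q₂ q p₁ p₂ p : ℝ≥0∞)
    (hq₁ : 1 ≤ q₁) (hq₂ : 1 ≤ q₂) (hp₁ : 1 ≤ p₁) (hp₂ : 1 ≤ p₂)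
    (hq : 1 / q₁ + 1 / q₂ = 1 / q) (hp : 1 / p₁ + 1 / p₂ = 1 / p)
    (f g : G → ℂ) (hf : AEStronglyMeasurable f μ) (hg : AEStronglyMeasurable g μ) :
    partNorm μ q p π (f * g) ≤ partNorm μ q₁ p₁ π f * partNorm μ q₂ p₂ π g := by
  have hblock : ∀ A ∈ π, eLpNorm (A.indicator (f * g)) q μ ≤
      eLpNorm (A.indicator f) q₁ μ * eLpNorm (A.indicator g) q₂ μ := by
    intro A hA
    have hind : A.indicator (f * g) = fun x => A.indicator f x * A.indicator g x := by
      funext x; by_cases hx : x ∈ A <;> simp [Set.indicator, hx]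
    rw [hind]
    have hT : ENNReal.HolderTriple q₁ q₂ q := ⟨by simpa only [one_div] using hq⟩
    simpa using eLpNorm_le_eLpNorm_mul_eLpNorm'_of_norm (hf.indicator (hπm A hA))
      (hg.indicator (hπm A hA)) (· * ·) 1
      (Filter.Eventually.of_forall fun x => by simp [norm_mul]) (hpqr := hT)
  by_cases hp₁t : p₁ = ∞
  · by_cases hp₂t : p₂ = ∞
    · -- both infinite, so p = ∞
      have hpt : p = ∞ := by
        rw [hp₁t, hp₂t] at hp
        simpa [one_div, eq_comm (a := (0:ℝ≥0∞)), ENNReal.inv_eq_zero] using hp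
      subst hpt; subst hp₁t; subst hp₂t
      simp only [partNorm, if_true]
      exact iSup₂_le fun A hA => (hblock A hA).trans
        (mul_le_mul' (le_iSup₂ (f := fun A (_ : A ∈ π) => eLpNorm (A.indicator f) q₁ μ) A hA)
          (le_iSup₂ (f := fun A (_ : A ∈ π) => eLpNorm (A.indicator g) q₂ μ) A hA))
    · -- p₁ = ∞, p₂ ≠ ∞, so p = p₂
      have hpp : p = p₂ := by
        rw [hp₁t] at hp
        simp only [one_div, ENNReal.inv_top, zero_add] at hp
        exact (inv_inj.mp hp).symm
      subst hp₁t; rw [hpp]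
      have hp0 : p₂ ≠ 0 := (lt_of_lt_of_le zero_lt_one hp₂).ne'
      have hpt0 : 0 < p₂.toReal := ENNReal.toReal_pos hp0 hp₂t
      simp only [partNorm, if_true]
      rw [if_neg hp₂t, if_neg hp₂t]
      set S := ⨆ A ∈ π, eLpNorm (A.indicator f) q₁ μ with hS
      calc (∑' A : π, eLpNorm ((A : Set G).indicator (f * g)) q μ ^ p₂.toReal) ^ (1 / p₂.toReal)
          ≤ (∑' A : π, (S * eLpNorm ((A : Set G).indicator g) q₂ μ) ^ p₂.toReal) ^
              (1 / p₂.toReal) := by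
            refine ENNReal.rpow_le_rpow (ENNReal.tsum_le_tsum fun A => ?_) (by positivity)
            refine ENNReal.rpow_le_rpow ((hblock A A.2).trans (mul_le_mul_left ?_ _)) hpt0.le
            exact le_iSup₂ (f := fun A (_ : A ∈ π) => eLpNorm (A.indicator f) q₁ μ) A.1 A.2
        _ = S * (∑' A : π, eLpNorm ((A : Set G).indicator g) q₂ μ ^ p₂.toReal) ^
              (1 / p₂.toReal) := by
            simp only [ENNReal.mul_rpow_of_nonneg _ _ hpt0.le]
            rw [ENNReal.tsum_mul_left,
              ENNReal.mul_rpow_of_nonneg _ _ (by positivity : (0:ℝ) ≤ 1 / p₂.toReal),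
              ← ENNReal.rpow_mul, mul_one_div_cancel hpt0.ne', ENNReal.rpow_one]
  · by_cases hp₂t : p₂ = ∞
    · -- p₂ = ∞, p₁ ≠ ∞, so p = p₁
      have hpp : p = p₁ := by
        rw [hp₂t] at hp
        simp only [one_div, ENNReal.inv_top, add_zero] at hp
        exact (inv_inj.mp hp).symm
      subst hp₂t; rw [hpp]
      have hp0 : p₁ ≠ 0 := (lt_of_lt_of_le zero_lt_one hp₁).ne'
      have hpt0 : 0 < p₁.toReal := ENNReal.toReal_pos hp0 hp₁t
      simp only [partNorm, if_true]
      rw [if_neg hp₁t, if_neg hp₁t]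
      set S := ⨆ A ∈ π, eLpNorm (A.indicator g) q₂ μ with hS
      calc (∑' A : π, eLpNorm ((A : Set G).indicator (f * g)) q μ ^ p₁.toReal) ^ (1 / p₁.toReal)
          ≤ (∑' A : π, (eLpNorm ((A : Set G).indicator f) q₁ μ * S) ^ p₁.toReal) ^
              (1 / p₁.toReal) := by
            refine ENNReal.rpow_le_rpow (ENNReal.tsum_le_tsum fun A => ?_) (by positivity)
            refine ENNReal.rpow_le_rpow ((hblock A A.2).trans (mul_le_mul_right ?_ _)) hpt0.le
            exact le_iSup₂ (f := fun A (_ : A ∈ π) => eLpNorm (A.indicator g) q₂ μ) A.1 A.2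
        _ = (∑' A : π, eLpNorm ((A : Set G).indicator f) q₁ μ ^ p₁.toReal) ^
              (1 / p₁.toReal) * S := by
            simp only [ENNReal.mul_rpow_of_nonneg _ _ hpt0.le]
            rw [ENNReal.tsum_mul_right,
              ENNReal.mul_rpow_of_nonneg _ _ (by positivity : (0:ℝ) ≤ 1 / p₁.toReal),
              ← ENNReal.rpow_mul (S), mul_one_div_cancel hpt0.ne', ENNReal.rpow_one]
    · -- both finite
      have hptop : p ≠ ∞ := by
        intro h
        rw [h] at hp
        simp only [one_div, ENNReal.inv_top] at hp
        have h1 : p₁⁻¹ = 0 := by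
          have := le_antisymm (le_of_eq hp) zero_le
          exact (add_eq_zero.mp this).1
        exact hp₁t (ENNReal.inv_eq_zero.mp h1)
      simp only [partNorm]
      rw [if_neg hptop, if_neg hp₁t, if_neg hp₂t]
      calc (∑' A : π, eLpNorm ((A : Set G).indicator (f * g)) q μ ^ p.toReal) ^ (1 / p.toReal)
          ≤ (∑' A : π, (eLpNorm ((A : Set G).indicator f) q₁ μ *
              eLpNorm ((A : Set G).indicator g) q₂ μ) ^ p.toReal) ^ (1 / p.toReal) := by
            refine ENNReal.rpow_le_rpow (ENNReal.tsum_le_tsum fun A => ?_) (by positivity)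
            exact ENNReal.rpow_le_rpow (hblock A A.2) ENNReal.toReal_nonneg
        _ ≤ _ := lp_holder _ _ hp₁ hp₂ hp₁t hp₂t hp

theorem statement11
    (μ : Measure G) [μ.IsHaarMeasure]
    (nm : G → ℝ) (γ ρ : ℝ)
    (hnm_cont : Continuous nm)
    (hnm_nonneg : ∀ x : G, 0 ≤ nm x)
    (hnm_zero : ∀ x : G, nm x = 0 ↔ x = 1)
    (hnm_inv : ∀ x : G, nm x⁻¹ = nm x)
    (hγ : 1 ≤ γ)
    (hnm_mul : ∀ x y : G, nm (x * y) ≤ γ * (nm x + nm y))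
    (hball_cpt : ∀ (x : G) (r : ℝ), 0 < r → IsCompact (closure (gball nm x r)))
    (hρ : 0 < ρ)
    (hvol : ∀ r : ℝ, 0 < r → μ (gball nm 1 r) = ENNReal.ofReal (r ^ ρ))
    (πr : ℝ → Set (Set G))
    (hπr : ∀ r : ℝ, 0 < r → IsUniformPartition (πr r)
      (gball nm 1 (r / (4 * γ ^ 2)))
      (gball nm 1 (r / (4 * γ ^ 2)) * gball nm 1 (r / (4 * γ ^ 2))))
   (q₁ p₁ α₁ q₂ p₂ α₂ q p α : ℝ≥0∞)
    (hq₁ : 1 ≤ q₁) (hp₁ : 1 ≤ p₁) (hα₁ : 1 ≤ α₁)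
    (hq₂ : 1 ≤ q₂) (hp₂ : 1 ≤ p₂) (hα₂ : 1 ≤ α₂)
    (hqα₁ : q₁ ≤ α₁) (hqα₂ : q₂ ≤ α₂)
    (hq : 1 / q₁ + 1 / q₂ = 1 / q) (hq1 : 1 ≤ q)
    (hp : 1 / p₁ + 1 / p₂ = 1 / p) (hp1 : 1 ≤ p)
    (hα : 1 / α₁ + 1 / α₂ = 1 / α)
    (f g : G → ℂ) (hf : AEStronglyMeasurable f μ) (hg : AEStronglyMeasurable g μ) :
    alphaNorm μ nm πr q p α (f * g) ≤
      alphaNorm μ nm πr q₁ p₁ α₁ f * alphaNorm μ nm πr q₂ p₂ α₂ g := by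
  have hq₁0 : q₁ ≠ 0 := (lt_of_lt_of_le zero_lt_one hq₁).ne'
  have hq₂0 : q₂ ≠ 0 := (lt_of_lt_of_le zero_lt_one hq₂).ne'
  have hα₁0 : α₁ ≠ 0 := (lt_of_lt_of_le zero_lt_one hα₁).ne'
  have hα₂0 : α₂ ≠ 0 := (lt_of_lt_of_le zero_lt_one hα₂).ne'
  have hqr : q⁻¹.toReal = q₁⁻¹.toReal + q₂⁻¹.toReal := by
    simp only [one_div] at hq
    rw [← hq, ENNReal.toReal_add (ENNReal.inv_ne_top.mpr hq₁0) (ENNReal.inv_ne_top.mpr hq₂0)]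
  have hαr : α⁻¹.toReal = α₁⁻¹.toReal + α₂⁻¹.toReal := by
    simp only [one_div] at hα
    rw [← hα, ENNReal.toReal_add (ENNReal.inv_ne_top.mpr hα₁0) (ENNReal.inv_ne_top.mpr hα₂0)]
  have hE : α⁻¹.toReal - q⁻¹.toReal =
      (α₁⁻¹.toReal - q₁⁻¹.toReal) + (α₂⁻¹.toReal - q₂⁻¹.toReal) := by
    rw [hqr, hαr]; ring
  simp only [alphaNorm]
  refine iSup₂_le fun r hr => ?_
  have hc0 : μ (gball nm 1 r) ≠ 0 := by
    rw [hvol r hr]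
    simp only [ne_eq, ENNReal.ofReal_eq_zero, not_le]
    exact Real.rpow_pos_of_pos hr ρ
  have hctop : μ (gball nm 1 r) ≠ ∞ := by rw [hvol r hr]; exact ENNReal.ofReal_ne_top
  have key := partNorm_mul_le μ (πr r) (hπr r hr).2.1 q₁ q₂ q p₁ p₂ p hq₁ hq₂ hp₁ hp₂
    hq hp f g hf hg
  have hsplit : μ (gball nm 1 r) ^ (α⁻¹.toReal - q⁻¹.toReal) =
      μ (gball nm 1 r) ^ (α₁⁻¹.toReal - q₁⁻¹.toReal) *
        μ (gball nm 1 r) ^ (α₂⁻¹.toReal - q₂⁻¹.toReal) := by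
    rw [hE, ENNReal.rpow_add _ _ hc0 hctop]
  refine le_trans ?_ (mul_le_mul'
    (le_iSup₂ (f := fun r (_ : (0:ℝ) < r) => μ (gball nm 1 r) ^ (α₁⁻¹.toReal - q₁⁻¹.toReal) *
      partNorm μ q₁ p₁ (πr r) f) r hr)
    (le_iSup₂ (f := fun r (_ : (0:ℝ) < r) => μ (gball nm 1 r) ^ (α₂⁻¹.toReal - q₂⁻¹.toReal) *
      partNorm μ q₂ p₂ (πr r) g) r hr))
  rw [hsplit, mul_mul_mul_comm]
  exact mul_le_mul_right key _
end

section
/- Let p₁, p₂, q₁, q₂, α ∈ [1,∞] with q₁ ≤ q₂ ≤ α ≤ p₂ ≤ p₁. Then for every measurable function f on G: ‖f‖_{q₁,p₁,α} ≤ (1/(2γ))^{ρ(1/q₁ − 1/q₂)} · ‖f‖_{q₂,p₂,α}; moreover ‖f‖_{q₁,q₁,q₁} = ‖f‖_{q₁}. In particular (L^{q₂},L^{p₂})^α(G) ⊆ (L^{q₁},L^{p₁})^α(G). -/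
open MeasureTheory ENNReal NNReal Set Filter Topology Pointwise

variable {G : Type*} [Group G] [TopologicalSpace G] [IsTopologicalGroup G]
  [T2Space G] [LocallyCompactSpace G] [SigmaCompactSpace G]
  [MeasurableSpace G] [BorelSpace G]

set_option linter.unusedSectionVars false

section Aux

lemma ell_sup_le {ι : Type*} (x : ι → ℝ≥0∞) {c : ℝ} (hc : 0 < c) (i : ι) :
    x i ≤ (∑' j, x j ^ c) ^ (1 / c) := by
  have h1 : x i ^ c ≤ ∑' j, x j ^ c := ENNReal.le_tsum i
  have h2 := ENNReal.rpow_le_rpow h1 (by positivity : (0:ℝ) ≤ 1/c)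
  rwa [← ENNReal.rpow_mul, mul_one_div, div_self hc.ne', ENNReal.rpow_one] at h2

lemma ell_mono {ι : Type*} (x : ι → ℝ≥0∞) {c d : ℝ} (hc : 0 < c) (hcd : c ≤ d) :
    (∑' i, x i ^ d) ^ (1 / d) ≤ (∑' i, x i ^ c) ^ (1 / c) := by
  rcases eq_or_lt_of_le hcd with rfl | hlt
  · rfl
  have hd : 0 < d := hc.trans hlt
  set S := ∑' i, x i ^ c with hS
  rcases eq_top_or_lt_top S with hStop | hSfin
  · rw [hStop, ENNReal.top_rpow_of_pos (by positivity)]; exact le_top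
  have hsum : ∑' i, x i ^ d ≤ S ^ (d / c) := by
    calc ∑' i, x i ^ d = ∑' i, x i ^ c * x i ^ (d - c) := by
          refine tsum_congr fun i => ?_
          rw [← ENNReal.rpow_add_of_nonneg _ _ hc.le (by linarith)]
          ring_nf
      _ ≤ ∑' i, x i ^ c * (S ^ (1/c)) ^ (d - c) := by
          refine ENNReal.tsum_le_tsum fun i => ?_
          exact mul_le_mul_right (ENNReal.rpow_le_rpow (ell_sup_le x hc i) (by linarith)) _
      _ = S * S ^ ((1/c) * (d - c)) := by
          rw [ENNReal.tsum_mul_right, ← ENNReal.rpow_mul]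
      _ = S ^ (1 + (1/c) * (d - c)) := by
          rw [ENNReal.rpow_add_of_nonneg _ _ zero_le_one
            (mul_nonneg (by positivity) (by linarith)), ENNReal.rpow_one]
      _ = S ^ (d / c) := by
          congr 1; field_simp; ring
  have h := ENNReal.rpow_le_rpow hsum (by positivity : (0:ℝ) ≤ 1/d)
  rw [← ENNReal.rpow_mul] at h
  have he : d / c * (1 / d) = 1 / c := by field_simp
  rwa [he] at h

lemma ell_scale {ι : Type*} (x y : ι → ℝ≥0∞) (D : ℝ≥0∞) {c : ℝ} (hc : 0 < c)
    (h : ∀ i, x i ≤ D * y i) :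
    (∑' i, x i ^ c) ^ (1 / c) ≤ D * (∑' i, y i ^ c) ^ (1 / c) := by
  have h1 : ∑' i, x i ^ c ≤ D ^ c * ∑' i, y i ^ c := by
    rw [← ENNReal.tsum_mul_left]
    refine ENNReal.tsum_le_tsum fun i => ?_
    rw [← ENNReal.mul_rpow_of_nonneg _ _ hc.le]
    exact ENNReal.rpow_le_rpow (h i) hc.le
  have h2 := ENNReal.rpow_le_rpow h1 (by positivity : (0:ℝ) ≤ 1/c)
  rwa [ENNReal.mul_rpow_of_nonneg _ _ (by positivity : (0:ℝ) ≤ 1/c), ← ENNReal.rpow_mul,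
    mul_one_div, div_self hc.ne', ENNReal.rpow_one] at h2

lemma partNorm_eq_eLpNorm (μ : Measure G) {q : ℝ≥0∞} (hq : 1 ≤ q) {π : Set (Set G)}
    (hc : π.Countable) (hm : ∀ A ∈ π, MeasurableSet A) (hd : π.PairwiseDisjoint id)
    (hu : ⋃₀ π = univ) (f : G → ℂ) :
    partNorm μ q q π f = eLpNorm f q μ := by
  haveI := hc.to_subtype
  have hq0 : q ≠ 0 := (lt_of_lt_of_le zero_lt_one hq).ne'
  have hU : ⋃ (A : π), (A : Set G) = univ := by rw [← Set.sUnion_eq_iUnion]; exact hu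
  by_cases hqt : q = ∞
  · subst hqt
    rw [partNorm, if_pos rfl]
    apply le_antisymm
    · exact iSup₂_le fun A hA => eLpNorm_indicator_le f
    · rw [eLpNorm_exponent_top, eLpNormEssSup]
      refine essSup_le_of_ae_le _ ?_
      have hae : ∀ᵐ x ∂μ, ∀ A : π, (‖(A : Set G).indicator f x‖₊ : ℝ≥0∞)
          ≤ eLpNorm ((A : Set G).indicator f) ∞ μ := by
        rw [ae_all_iff]
        intro A
        rw [eLpNorm_exponent_top, eLpNormEssSup]
        exact ENNReal.ae_le_essSup _
      filter_upwards [hae] with x hx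
      have hxU : x ∈ ⋃ (A : π), (A : Set G) := hU ▸ Set.mem_univ x
      obtain ⟨A, hA⟩ := Set.mem_iUnion.mp hxU
      calc (‖f x‖₊ : ℝ≥0∞) = ‖(A : Set G).indicator f x‖₊ := by
            rw [Set.indicator_of_mem hA]
        _ ≤ eLpNorm ((A : Set G).indicator f) ∞ μ := hx A
        _ ≤ ⨆ B ∈ π, eLpNorm (B.indicator f) ∞ μ :=
            le_iSup₂ (f := fun B (_ : B ∈ π) => eLpNorm (B.indicator f) ∞ μ) (A : Set G) A.2
  · have hqr : 0 < q.toReal := ENNReal.toReal_pos hq0 hqt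
    rw [partNorm, if_neg hqt]
    have hterm : ∀ A : π, eLpNorm ((A : Set G).indicator f) q μ ^ q.toReal
        = ∫⁻ x in (A : Set G), (‖f x‖₊ : ℝ≥0∞) ^ q.toReal ∂μ := by
      intro A
      rw [eLpNorm_eq_lintegral_rpow_enorm_toReal hq0 hqt, ← ENNReal.rpow_mul, one_div,
        inv_mul_cancel₀ hqr.ne', ENNReal.rpow_one, ← lintegral_indicator (hm A A.2)]
      congr 1; ext x
      by_cases hx : x ∈ (A : Set G)
      · simp [Set.indicator_of_mem hx]; rfl
      · simp [Set.indicator_of_notMem hx, ENNReal.zero_rpow_of_pos hqr]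
    have hdp : Pairwise (Function.onFun Disjoint fun A : π => (A : Set G)) :=
      fun i j hij => hd i.2 j.2 (fun h => hij (Subtype.ext h))
    calc (∑' A : π, eLpNorm ((A : Set G).indicator f) q μ ^ q.toReal) ^ (1/q.toReal)
        = (∑' A : π, ∫⁻ x in (A : Set G), (‖f x‖₊ : ℝ≥0∞) ^ q.toReal ∂μ) ^ (1/q.toReal) := by
          rw [tsum_congr hterm]
      _ = (∫⁻ x, (‖f x‖₊ : ℝ≥0∞) ^ q.toReal ∂μ) ^ (1/q.toReal) := by
          rw [← lintegral_iUnion (fun A : π => hm A A.2) hdp, hU, setLIntegral_univ]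
      _ = eLpNorm f q μ := (eLpNorm_eq_lintegral_rpow_enorm_toReal (f := f) (μ := μ) hq0 hqt).symm

lemma gball_mul_subset (nm : G → ℝ) (γ : ℝ) (hγ : 1 ≤ γ)
    (hnm_mul : ∀ x y : G, nm (x * y) ≤ γ * (nm x + nm y)) (t : ℝ) :
    gball nm 1 t * gball nm 1 t ⊆ gball nm 1 (2 * γ * t) := by
  rintro z ⟨u, hu, v, hv, rfl⟩
  simp only [gball, Set.mem_setOf_eq, inv_one, one_mul] at hu hv ⊢
  calc nm (u * v) ≤ γ * (nm u + nm v) := hnm_mul u v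
    _ < 2 * γ * t := by nlinarith

lemma measure_smul_gball (μ : Measure G) [μ.IsHaarMeasure] (nm : G → ℝ) (x : G) (c : ℝ) :
    μ (x • gball nm 1 c) = μ (gball nm 1 c) := by
  have h : x • gball nm 1 c = (fun h => x⁻¹ * h) ⁻¹' gball nm 1 c := by
    ext y
    simp [Set.mem_smul_set_iff_inv_smul_mem, smul_eq_mul]
  rw [h, measure_preimage_mul]

lemma block_holder (μ : Measure G) {A : Set G} (hA : MeasurableSet A) {q₁ q₂ : ℝ≥0∞}
    (h12 : q₁ ≤ q₂) {f : G → ℂ} (hf : AEStronglyMeasurable f μ) :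
    eLpNorm (A.indicator f) q₁ μ
      ≤ eLpNorm (A.indicator f) q₂ μ * μ A ^ (q₁⁻¹.toReal - q₂⁻¹.toReal) := by
  rw [eLpNorm_indicator_eq_eLpNorm_restrict hA, eLpNorm_indicator_eq_eLpNorm_restrict hA]
  have h := eLpNorm_le_eLpNorm_mul_rpow_measure_univ h12 (hf.restrict (s := A))
  simpa [Measure.restrict_apply_univ, ENNReal.toReal_inv, one_div] using h

lemma expo_calc (γ ρ : ℝ) (hγ : 1 ≤ γ) {r : ℝ} (hr : 0 < r) (a b1 b2 : ℝ) :
    ENNReal.ofReal (r ^ ρ) ^ (a - b1) * ENNReal.ofReal ((r / (2 * γ)) ^ ρ) ^ (b1 - b2)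
      = ENNReal.ofReal ((1 / (2 * γ)) ^ (ρ * (b1 - b2)))
          * ENNReal.ofReal (r ^ ρ) ^ (a - b2) := by
  have h2γ : (0:ℝ) < 2 * γ := by linarith
  have hrρ : (0:ℝ) < r ^ ρ := Real.rpow_pos_of_pos hr ρ
  have hrd : (0:ℝ) < r / (2 * γ) := by positivity
  have hinv : (0:ℝ) < 1 / (2 * γ) := by positivity
  rw [ENNReal.ofReal_rpow_of_pos (p := a - b1) hrρ,
    ENNReal.ofReal_rpow_of_pos (p := a - b2) hrρ,
    ENNReal.ofReal_rpow_of_pos (Real.rpow_pos_of_pos hrd ρ),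
    ← ENNReal.ofReal_mul (by positivity), ← ENNReal.ofReal_mul (by positivity)]
  congr 1
  have e0 : r / (2 * γ) = r * (1 / (2 * γ)) := by field_simp
  have e1 : ((r / (2 * γ)) ^ ρ) ^ (b1 - b2)
      = (r ^ ρ) ^ (b1 - b2) * ((1 / (2 * γ)) ^ ρ) ^ (b1 - b2) := by
    rw [e0, Real.mul_rpow hr.le hinv.le, Real.mul_rpow (by positivity) (by positivity)]
  rw [e1, ← mul_assoc, ← Real.rpow_add hrρ, ← Real.rpow_mul hinv.le]
  ring_nf

lemma partNorm_le_partNorm (μ : Measure G) {q₁ q₂ p₁ p₂ : ℝ≥0∞} (hp2 : 1 ≤ p₂)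
    (hp : p₂ ≤ p₁) {π : Set (Set G)} {D : ℝ≥0∞} {f : G → ℂ}
    (hab : ∀ A ∈ π, eLpNorm (A.indicator f) q₁ μ ≤ D * eLpNorm (A.indicator f) q₂ μ) :
    partNorm μ q₁ p₁ π f ≤ D * partNorm μ q₂ p₂ π f := by
  by_cases hp2t : p₂ = ∞
  · have hp1t : p₁ = ∞ := top_le_iff.mp (hp2t ▸ hp)
    rw [partNorm, if_pos hp1t, partNorm, if_pos hp2t]
    refine iSup₂_le fun A hA => (hab A hA).trans (mul_le_mul_right ?_ D)
    exact le_iSup₂ (f := fun B (_ : B ∈ π) => eLpNorm (B.indicator f) q₂ μ) A hA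
  · have hp2r : 0 < p₂.toReal := ENNReal.toReal_pos (lt_of_lt_of_le zero_lt_one hp2).ne' hp2t
    by_cases hp1t : p₁ = ∞
    · rw [partNorm, if_pos hp1t, partNorm, if_neg hp2t]
      refine iSup₂_le fun A hA => (hab A hA).trans (mul_le_mul_right ?_ D)
      exact ell_sup_le (fun B : π => eLpNorm ((B : Set G).indicator f) q₂ μ) hp2r ⟨A, hA⟩
    · have hp1r : p₂.toReal ≤ p₁.toReal :=
        (ENNReal.toReal_le_toReal hp2t hp1t).mpr hp
      rw [partNorm, if_neg hp1t, partNorm, if_neg hp2t]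
      calc (∑' A : π, eLpNorm ((A : Set G).indicator f) q₁ μ ^ p₁.toReal) ^ (1 / p₁.toReal)
          ≤ (∑' A : π, eLpNorm ((A : Set G).indicator f) q₁ μ ^ p₂.toReal) ^ (1 / p₂.toReal) :=
            ell_mono _ hp2r hp1r
        _ ≤ D * (∑' A : π, eLpNorm ((A : Set G).indicator f) q₂ μ ^ p₂.toReal) ^ (1 / p₂.toReal) :=
            ell_scale _ _ D hp2r fun A => hab A.1 A.2

end Aux

theorem statement12
    (μ : Measure G) [μ.IsHaarMeasure]
    (nm : G → ℝ) (γ ρ : ℝ)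
    (hnm_cont : Continuous nm)
    (hnm_nonneg : ∀ x : G, 0 ≤ nm x)
    (hnm_zero : ∀ x : G, nm x = 0 ↔ x = 1)
    (hnm_inv : ∀ x : G, nm x⁻¹ = nm x)
    (hγ : 1 ≤ γ)
    (hnm_mul : ∀ x y : G, nm (x * y) ≤ γ * (nm x + nm y))
    (hball_cpt : ∀ (x : G) (r : ℝ), 0 < r → IsCompact (closure (gball nm x r)))
    (hρ : 0 < ρ)
    (hvol : ∀ r : ℝ, 0 < r → μ (gball nm 1 r) = ENNReal.ofReal (r ^ ρ))
    (πr : ℝ → Set (Set G))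
    (hπr : ∀ r : ℝ, 0 < r → IsUniformPartition (πr r)
      (gball nm 1 (r / (4 * γ ^ 2)))
      (gball nm 1 (r / (4 * γ ^ 2)) * gball nm 1 (r / (4 * γ ^ 2))))
   (q₁ q₂ p₁ p₂ α : ℝ≥0∞)
    (h1 : 1 ≤ q₁) (h2 : q₁ ≤ q₂) (h3 : q₂ ≤ α) (h4 : α ≤ p₂) (h5 : p₂ ≤ p₁) :
    (∀ f : G → ℂ, AEStronglyMeasurable f μ →
        alphaNorm μ nm πr q₁ p₁ α f ≤
          ENNReal.ofReal ((1 / (2 * γ)) ^ (ρ * (q₁⁻¹.toReal - q₂⁻¹.toReal))) *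
            alphaNorm μ nm πr q₂ p₂ α f) ∧
    (∀ f : G → ℂ, AEStronglyMeasurable f μ →
        alphaNorm μ nm πr q₁ q₁ q₁ f = eLpNorm f q₁ μ) ∧
    ∀ f : G → ℂ, AEStronglyMeasurable f μ →
      alphaNorm μ nm πr q₂ p₂ α f < ∞ → alphaNorm μ nm πr q₁ p₁ α f < ∞ := by
  have hγ0 : (0:ℝ) < γ := lt_of_lt_of_le zero_lt_one hγ
  have hq2 : 1 ≤ q₂ := h1.trans h2
  have hp2 : 1 ≤ p₂ := hq2.trans (h3.trans h4)
  have hb : q₂⁻¹.toReal ≤ q₁⁻¹.toReal :=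
    ENNReal.toReal_mono (ENNReal.inv_ne_top.mpr (lt_of_lt_of_le zero_lt_one h1).ne')
      (ENNReal.inv_le_inv.mpr h2)
  have key : ∀ f : G → ℂ, AEStronglyMeasurable f μ →
      alphaNorm μ nm πr q₁ p₁ α f ≤
        ENNReal.ofReal ((1 / (2 * γ)) ^ (ρ * (q₁⁻¹.toReal - q₂⁻¹.toReal))) *
          alphaNorm μ nm πr q₂ p₂ α f := by
    intro f hf
    simp only [alphaNorm]
    refine iSup₂_le fun r hr => ?_
    obtain ⟨hcnt, hmeas, hdisj, hcov, hgeom⟩ := hπr r hr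
    have hr2γ : 0 < r / (2 * γ) := by positivity
    have hblock : ∀ A ∈ πr r, μ A ≤ ENNReal.ofReal ((r / (2 * γ)) ^ ρ) := by
      intro A hA
      obtain ⟨x, hxA, hxU, hxV⟩ := hgeom A hA
      have harith : 2 * γ * (r / (4 * γ ^ 2)) = r / (2 * γ) := by
        field_simp; ring
      have hsub : A ⊆ x • gball nm 1 (r / (2 * γ)) := by
        refine hxV.trans (Set.smul_set_mono ?_)
        have := gball_mul_subset nm γ hγ hnm_mul (r / (4 * γ ^ 2))
        rwa [harith] at this
      calc μ A ≤ μ (x • gball nm 1 (r / (2 * γ))) := measure_mono hsub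
        _ = μ (gball nm 1 (r / (2 * γ))) := measure_smul_gball μ nm x _
        _ = ENNReal.ofReal ((r / (2 * γ)) ^ ρ) := hvol _ hr2γ
    set D := ENNReal.ofReal ((r / (2 * γ)) ^ ρ) ^ (q₁⁻¹.toReal - q₂⁻¹.toReal) with hD
    have hab : ∀ A ∈ πr r,
        eLpNorm (A.indicator f) q₁ μ ≤ D * eLpNorm (A.indicator f) q₂ μ := by
      intro A hA
      refine (block_holder μ (hmeas A hA) h2 hf).trans ?_
      rw [mul_comm]
      exact mul_le_mul_left (ENNReal.rpow_le_rpow (hblock A hA) (by linarith)) _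
    have hpn := partNorm_le_partNorm μ hp2 h5 hab
    calc μ (gball nm 1 r) ^ (α⁻¹.toReal - q₁⁻¹.toReal) * partNorm μ q₁ p₁ (πr r) f
        ≤ μ (gball nm 1 r) ^ (α⁻¹.toReal - q₁⁻¹.toReal)
            * (D * partNorm μ q₂ p₂ (πr r) f) := mul_le_mul_right hpn _
      _ = (μ (gball nm 1 r) ^ (α⁻¹.toReal - q₁⁻¹.toReal) * D)
            * partNorm μ q₂ p₂ (πr r) f := (mul_assoc _ _ _).symm
      _ = (ENNReal.ofReal ((1 / (2 * γ)) ^ (ρ * (q₁⁻¹.toReal - q₂⁻¹.toReal)))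
            * μ (gball nm 1 r) ^ (α⁻¹.toReal - q₂⁻¹.toReal))
            * partNorm μ q₂ p₂ (πr r) f := by
          rw [hD, hvol r hr, expo_calc γ ρ hγ hr _ _ _]
      _ = ENNReal.ofReal ((1 / (2 * γ)) ^ (ρ * (q₁⁻¹.toReal - q₂⁻¹.toReal)))
            * (μ (gball nm 1 r) ^ (α⁻¹.toReal - q₂⁻¹.toReal)
              * partNorm μ q₂ p₂ (πr r) f) := mul_assoc _ _ _
      _ ≤ ENNReal.ofReal ((1 / (2 * γ)) ^ (ρ * (q₁⁻¹.toReal - q₂⁻¹.toReal)))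
            * ⨆ (s : ℝ) (_ : 0 < s), μ (gball nm 1 s) ^ (α⁻¹.toReal - q₂⁻¹.toReal)
              * partNorm μ q₂ p₂ (πr s) f :=
          mul_le_mul_right (le_iSup₂ (f := fun s (_ : 0 < s) =>
            μ (gball nm 1 s) ^ (α⁻¹.toReal - q₂⁻¹.toReal) * partNorm μ q₂ p₂ (πr s) f) r hr) _
  refine ⟨key, fun f hf => ?_, fun f hf hfin => (key f hf).trans_lt ?_⟩
  · have hpe : ∀ s : ℝ, 0 < s → partNorm μ q₁ q₁ (πr s) f = eLpNorm f q₁ μ := by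
      intro s hs
      obtain ⟨hcnt, hmeas, hdisj, hcov, _⟩ := hπr s hs
      exact partNorm_eq_eLpNorm μ h1 hcnt hmeas hdisj hcov f
    simp only [alphaNorm, sub_self, ENNReal.rpow_zero, one_mul]
    apply le_antisymm
    · exact iSup₂_le fun s hs => (hpe s hs).le
    · calc eLpNorm f q₁ μ = partNorm μ q₁ q₁ (πr 1) f := (hpe 1 one_pos).symm
        _ ≤ ⨆ (s : ℝ) (_ : 0 < s), partNorm μ q₁ q₁ (πr s) f :=
            le_iSup₂ (f := fun s (_ : 0 < s) => partNorm μ q₁ q₁ (πr s) f) 1 one_pos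
  · exact ENNReal.mul_lt_top ENNReal.ofReal_lt_top hfin
end

section
/- Let q ∈ [1,∞) and let f be a measurable function on G with _{B(e,r₀)}‖f‖_{q,∞} < ∞ for some r₀ > 0. Then, as equalities in [0,∞]: lim_{r→+∞} _{B(e,r)}‖f‖_{q,∞} = ‖f‖_q = sup_{r>0} _{B(e,r)}‖f‖_{q,∞}, where _{B(e,r)}‖f‖_{q,∞} = ess sup_{y∈G} ‖f·χ_{yB(e,r)}‖_q. -/
open MeasureTheory ENNReal NNReal Set Filter Topology Pointwise

variable {G : Type*} [Group G] [TopologicalSpace G] [IsTopologicalGroup G]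
  [T2Space G] [LocallyCompactSpace G] [SigmaCompactSpace G]
  [MeasurableSpace G] [BorelSpace G]

lemma my_eLpNorm_indicator_mono {α E : Type*} [MeasurableSpace α] [NormedAddCommGroup E]
    (μ : Measure α) (q : ℝ≥0∞) {s t : Set α} (hst : s ⊆ t) (f : α → E) :
    eLpNorm (s.indicator f) q μ ≤ eLpNorm (t.indicator f) q μ := by
  refine eLpNorm_mono fun x => ?_
  by_cases hx : x ∈ s
  · simp [Set.indicator_of_mem hx, Set.indicator_of_mem (hst hx), le_refl]
  · simp [Set.indicator_of_notMem hx]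

lemma my_tendsto_setLIntegral {α : Type*} [MeasurableSpace α] (μ : Measure α) (g : α → ℝ≥0∞)
    (hg : AEMeasurable g μ) (s : ℕ → Set α) (hm : Monotone s)
    (hmeas : ∀ n, MeasurableSet (s n)) (hu : ∀ x, ∃ n, x ∈ s n) :
    Tendsto (fun n => ∫⁻ x in s n, g x ∂μ) atTop (𝓝 (∫⁻ x, g x ∂μ)) := by
  have h1 : ∀ n, ∫⁻ x in s n, g x ∂μ = ∫⁻ x, (s n).indicator g x ∂μ := fun n =>
    (lintegral_indicator (hmeas n) g).symm
  have h2 : (∫⁻ x, g x ∂μ) = ⨆ n, ∫⁻ x, (s n).indicator g x ∂μ := by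
    rw [← lintegral_iSup' (fun n => hg.indicator (hmeas n))
      (ae_of_all _ fun x n m hnm => by
        by_cases hx : x ∈ s n
        · simp [Set.indicator_of_mem hx, Set.indicator_of_mem (hm hnm hx), le_refl]
        · simp [Set.indicator_of_notMem hx])]
    congr 1; ext x
    obtain ⟨n, hn⟩ := hu x
    refine le_antisymm ?_ (iSup_le fun n => by
      by_cases hx : x ∈ s n <;> simp [Set.indicator_apply, hx])
    exact le_iSup_of_le n (by simp [Set.indicator_of_mem hn])
  simp_rw [h1, h2]
  exact tendsto_atTop_iSup (fun n m hnm => lintegral_mono fun x => by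
    by_cases hx : x ∈ s n
    · simp [Set.indicator_of_mem hx, Set.indicator_of_mem (hm hnm hx), le_refl]
    · simp [Set.indicator_of_notMem hx])

theorem statement13
    (μ : Measure G) [μ.IsHaarMeasure]
    (nm : G → ℝ) (γ ρ : ℝ)
    (hnm_cont : Continuous nm)
    (hnm_nonneg : ∀ x : G, 0 ≤ nm x)
    (hnm_zero : ∀ x : G, nm x = 0 ↔ x = 1)
    (hnm_inv : ∀ x : G, nm x⁻¹ = nm x)
    (hγ : 1 ≤ γ)
    (hnm_mul : ∀ x y : G, nm (x * y) ≤ γ * (nm x + nm y))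
    (hball_cpt : ∀ (x : G) (r : ℝ), 0 < r → IsCompact (closure (gball nm x r)))
    (hρ : 0 < ρ)
    (hvol : ∀ r : ℝ, 0 < r → μ (gball nm 1 r) = ENNReal.ofReal (r ^ ρ))
   (q : ℝ≥0∞) (hq1 : 1 ≤ q) (hq : q ≠ ∞)
    (f : G → ℂ) (hf : AEStronglyMeasurable f μ)
    (hfin : ∃ r₀ : ℝ, 0 < r₀ ∧ blockNorm μ q ∞ (gball nm 1 r₀) f < ∞) :
    Tendsto (fun r : ℝ => blockNorm μ q ∞ (gball nm 1 r) f) atTop (𝓝 (eLpNorm f q μ)) ∧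
      (⨆ (r : ℝ) (_ : 0 < r), blockNorm μ q ∞ (gball nm 1 r) f) = eLpNorm f q μ := by
  have hq0 : q ≠ 0 := (lt_of_lt_of_le zero_lt_one hq1).ne'
  set B : ℝ → Set G := fun r => gball nm 1 r with hB
  have hBmem : ∀ r (z : G), z ∈ B r ↔ nm z < r := by
    intro r z; simp [hB, gball]
  have hBmono : ∀ {r s : ℝ}, r ≤ s → B r ⊆ B s := by
    intro r s hrs z hz
    rw [hBmem] at hz ⊢; linarith
  have hBopen : ∀ r, IsOpen (B r) := by
    intro r
    have : B r = (fun z => nm ((1:G)⁻¹ * z)) ⁻¹' (Iio r) := rfl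
    rw [this]
    exact (hnm_cont.comp (continuous_const.mul continuous_id)).isOpen_preimage _ isOpen_Iio
  have hBmeas : ∀ r, MeasurableSet (B r) := fun r => (hBopen r).measurableSet
  have hblock : ∀ r, blockNorm μ q ∞ (B r) f
      = essSup (fun y => eLpNorm ((y • B r).indicator f) q μ) μ := fun r => if_pos rfl
  -- upper bound
  have hupper : ∀ r, blockNorm μ q ∞ (B r) f ≤ eLpNorm f q μ := by
    intro r
    rw [hblock]
    exact essSup_le_of_ae_le _ (ae_of_all _ fun y => eLpNorm_indicator_le f)
  -- monotonicity
  have hmono : Monotone fun r => blockNorm μ q ∞ (B r) f := by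
    intro r s hrs
    simp only [hblock]
    refine essSup_mono_ae (ae_of_all _ fun y => ?_)
    exact my_eLpNorm_indicator_mono μ q (smul_set_mono (hBmono hrs)) f
  -- lower bound
  have hγ0 : (0:ℝ) < γ := lt_of_lt_of_le zero_lt_one hγ
  have hlower : ∀ r' : ℝ, 0 ≤ r' →
      eLpNorm ((B r').indicator f) q μ ≤ blockNorm μ q ∞ (B (γ * (1 + r'))) f := by
    intro r' hr'
    set R := γ * (1 + r') with hR
    set g : G → ℝ≥0∞ := fun y => eLpNorm ((y • B R).indicator f) q μ with hgdef
    have hB1 : μ (B 1) ≠ 0 := by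
      rw [hvol 1 one_pos]
      simp [Real.one_rpow]
    have h2 : ∀ᵐ y ∂μ, g y ≤ essSup g μ := ae_le_essSup g
    obtain ⟨y, hy1, hy2⟩ : ∃ y, y ∈ B 1 ∧ g y ≤ essSup g μ := by
      by_contra h
      push_neg at h
      refine hB1 (measure_mono_null (fun y hy => ?_) (ae_iff.mp h2))
      exact not_le.mpr (h y hy)
    have hsub : B r' ⊆ y • B R := by
      intro z hz
      rw [hBmem] at hz
      rw [Set.mem_smul_set_iff_inv_smul_mem]
      have hny : nm y < 1 := (hBmem 1 y).mp hy1
      have : nm (y⁻¹ * z) ≤ γ * (nm y⁻¹ + nm z) := hnm_mul _ _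
      rw [hnm_inv] at this
      have hlt : γ * (nm y + nm z) < γ * (1 + r') :=
        mul_lt_mul_of_pos_left (add_lt_add hny hz) hγ0
      show (y⁻¹ * z) ∈ B R
      rw [hBmem]
      linarith
    calc eLpNorm ((B r').indicator f) q μ
        ≤ eLpNorm ((y • B R).indicator f) q μ := my_eLpNorm_indicator_mono μ q hsub f
      _ ≤ essSup g μ := hy2
      _ = blockNorm μ q ∞ (B R) f := (hblock R).symm
  -- tendsto of truncations
  have hφ : AEMeasurable (fun x => (‖f x‖₊ : ℝ≥0∞) ^ q.toReal) μ :=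
    hf.enorm.pow_const q.toReal
  have htrunc : Tendsto (fun n : ℕ => eLpNorm ((B n).indicator f) q μ) atTop
      (𝓝 (eLpNorm f q μ)) := by
    have hlint : Tendsto (fun n : ℕ => ∫⁻ x in B n, (‖f x‖₊ : ℝ≥0∞) ^ q.toReal ∂μ) atTop
        (𝓝 (∫⁻ x, (‖f x‖₊ : ℝ≥0∞) ^ q.toReal ∂μ)) := by
      refine my_tendsto_setLIntegral μ _ hφ _ (fun n m hnm => hBmono (by exact_mod_cast hnm))
        (fun n => hBmeas _) (fun x => ?_)
      obtain ⟨n, hn⟩ := exists_nat_gt (nm x)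
      exact ⟨n, (hBmem _ x).mpr hn⟩
    have heq : ∀ n : ℕ, eLpNorm ((B n).indicator f) q μ
        = (∫⁻ x in B n, (‖f x‖₊ : ℝ≥0∞) ^ q.toReal ∂μ) ^ (1 / q.toReal) := by
      intro n
      rw [eLpNorm_indicator_eq_eLpNorm_restrict (hBmeas _),
        eLpNorm_eq_lintegral_rpow_enorm_toReal hq0 hq]
      rfl
    have hfq : eLpNorm f q μ = (∫⁻ x, (‖f x‖₊ : ℝ≥0∞) ^ q.toReal ∂μ) ^ (1 / q.toReal) :=
      eLpNorm_eq_lintegral_rpow_enorm_toReal hq0 hq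
    simp_rw [heq, hfq]
    exact ((ENNReal.continuous_rpow_const).tendsto _).comp hlint
  -- main iSup equality over positive radii
  have key : (⨆ (r : ℝ) (_ : 0 < r), blockNorm μ q ∞ (B r) f) = eLpNorm f q μ := by
    refine le_antisymm (iSup₂_le fun r _ => hupper r) ?_
    refine le_of_tendsto htrunc (Eventually.of_forall fun n => ?_)
    have hpos : (0:ℝ) < γ * (1 + (n:ℝ)) := by
      have h0 : (0:ℝ) ≤ (n:ℝ) := Nat.cast_nonneg n
      nlinarith
    exact le_iSup₂_of_le (γ * (1 + (n:ℝ))) hpos (hlower (n:ℝ) (Nat.cast_nonneg n))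
  have total : (⨆ r : ℝ, blockNorm μ q ∞ (B r) f) = eLpNorm f q μ := by
    refine le_antisymm (iSup_le hupper) ?_
    rw [← key]
    exact iSup₂_le fun r _ => le_iSup (fun r => blockNorm μ q ∞ (B r) f) r
  refine ⟨?_, key⟩
  have := tendsto_atTop_iSup hmono
  rwa [total] at this
end

section
/- Let p, q, α ∈ [1,∞] with q ≤ α ≤ p. Then for every measurable function f on G: ‖f‖_{q,p,α} ≤ ‖f‖_α. Consequently L^α(G) ⊆ (L^q,L^p)^α(G). -/
open MeasureTheory ENNReal NNReal Set Filter Topology Pointwise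

variable {G : Type*} [Group G] [TopologicalSpace G] [IsTopologicalGroup G]
  [T2Space G] [LocallyCompactSpace G] [SigmaCompactSpace G]
  [MeasurableSpace G] [BorelSpace G]

lemma aux_tsum_rpow {ι : Type*} (a : ι → ℝ≥0∞) {s t : ℝ} (hs : 0 < s) (hst : s ≤ t) :
    (∑' i, a i ^ t) ^ (1 / t) ≤ (∑' i, a i ^ s) ^ (1 / s) := by
  have ht : 0 < t := hs.trans_le hst
  set S := ∑' i, a i ^ s with hS
  by_cases hS0 : S = 0
  · have h0 : ∀ i, a i = 0 := by
      intro i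
      have := ENNReal.tsum_eq_zero.mp hS0 i
      simpa [ENNReal.rpow_eq_zero_iff, hs, hs.not_gt, ht.not_gt] using this
    simp only [h0, ENNReal.zero_rpow_of_pos ht, tsum_zero,
      ENNReal.zero_rpow_of_pos (by positivity : (0:ℝ) < 1/t)]
    exact zero_le
  by_cases hStop : S = ∞
  · rw [hStop, ENNReal.top_rpow_of_pos (by positivity)]
    exact le_top
  have hc : (0:ℝ) ≤ t / s - 1 := by
    rw [sub_nonneg, le_div_iff₀ hs, one_mul]; exact hst
  have key : ∑' i, a i ^ t ≤ S ^ (t / s) := by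
    have hterm : ∀ i, a i ^ t ≤ a i ^ s * S ^ (t / s - 1) := by
      intro i
      have h1 : a i ^ t = a i ^ s * (a i ^ s) ^ (t / s - 1) := by
        rw [← ENNReal.rpow_one (a i ^ s), ← ENNReal.rpow_mul, ← ENNReal.rpow_mul,
          ← ENNReal.rpow_add_of_nonneg _ _ (by positivity) (by nlinarith)]
        congr 1
        field_simp
        ring
      rw [h1]
      exact mul_le_mul_right (ENNReal.rpow_le_rpow (ENNReal.le_tsum i) hc) _
    calc ∑' i, a i ^ t ≤ ∑' i, a i ^ s * S ^ (t / s - 1) := ENNReal.tsum_le_tsum hterm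
      _ = S * S ^ (t / s - 1) := ENNReal.tsum_mul_right
      _ = S ^ (t / s) := by
        have h5 : S ^ (t / s) = S ^ (1 + (t / s - 1)) := by ring_nf
        rw [h5, ENNReal.rpow_add_of_nonneg _ _ zero_le_one hc, ENNReal.rpow_one]
  calc (∑' i, a i ^ t) ^ (1 / t) ≤ (S ^ (t / s)) ^ (1 / t) :=
        ENNReal.rpow_le_rpow key (by positivity)
    _ = S ^ (1 / s) := by
        rw [← ENNReal.rpow_mul]
        congr 1
        field_simp

lemma aux_holder {E : Type*} [NormedAddCommGroup E] (μ : Measure G) {A : Set G}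
    (hA : MeasurableSet A) {q α : ℝ≥0∞} (hqα : q ≤ α) {f : G → E}
    (hf : AEStronglyMeasurable f μ) :
    eLpNorm (A.indicator f) q μ ≤
      μ A ^ (q⁻¹.toReal - α⁻¹.toReal) * eLpNorm (A.indicator f) α μ := by
  rw [eLpNorm_indicator_eq_eLpNorm_restrict hA, eLpNorm_indicator_eq_eLpNorm_restrict hA]
  have h := eLpNorm_le_eLpNorm_mul_rpow_measure_univ hqα hf.restrict (μ := μ.restrict A)
  rw [Measure.restrict_apply_univ] at h
  simpa [ENNReal.toReal_inv, one_div, mul_comm] using h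

lemma aux_sum {π : Set (Set G)} (μ : Measure G) (hcnt : π.Countable)
    (hmeas : ∀ A ∈ π, MeasurableSet A) (hdisj : π.PairwiseDisjoint id)
    (hcover : ⋃₀ π = univ) {α : ℝ≥0∞} (hα0 : α ≠ 0) (hαtop : α ≠ ∞) (f : G → ℂ) :
    (∑' A : π, eLpNorm ((A : Set G).indicator f) α μ ^ α.toReal) ^ (1 / α.toReal)
      = eLpNorm f α μ := by
  haveI := hcnt.to_subtype
  have hαt : 0 < α.toReal := ENNReal.toReal_pos hα0 hαtop
  have key : ∀ A : π, eLpNorm ((A : Set G).indicator f) α μ ^ α.toReal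
      = ∫⁻ x in (A : Set G), (‖f x‖₊ : ℝ≥0∞) ^ α.toReal ∂μ := by
    intro A
    rw [eLpNorm_indicator_eq_eLpNorm_restrict (hmeas A A.2),
      eLpNorm_eq_lintegral_rpow_enorm_toReal hα0 hαtop, ← ENNReal.rpow_mul, one_div,
      inv_mul_cancel₀ hαt.ne', ENNReal.rpow_one]
    rfl
  have hsum : ∑' A : π, eLpNorm ((A : Set G).indicator f) α μ ^ α.toReal
      = ∫⁻ x, (‖f x‖₊ : ℝ≥0∞) ^ α.toReal ∂μ := by
    rw [tsum_congr key,
      ← lintegral_iUnion (fun A : π => hmeas A A.2)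
        (fun i j hij => hdisj i.2 j.2 (Subtype.coe_injective.ne hij)),
      ← sUnion_eq_iUnion, hcover, Measure.restrict_univ]
  rw [hsum, eLpNorm_eq_lintegral_rpow_enorm_toReal hα0 hαtop]
  rfl

theorem statement14
    (μ : Measure G) [μ.IsHaarMeasure]
    (nm : G → ℝ) (γ ρ : ℝ)
    (hnm_cont : Continuous nm)
    (hnm_nonneg : ∀ x : G, 0 ≤ nm x)
    (hnm_zero : ∀ x : G, nm x = 0 ↔ x = 1)
    (hnm_inv : ∀ x : G, nm x⁻¹ = nm x)
    (hγ : 1 ≤ γ)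
    (hnm_mul : ∀ x y : G, nm (x * y) ≤ γ * (nm x + nm y))
    (hball_cpt : ∀ (x : G) (r : ℝ), 0 < r → IsCompact (closure (gball nm x r)))
    (hρ : 0 < ρ)
    (hvol : ∀ r : ℝ, 0 < r → μ (gball nm 1 r) = ENNReal.ofReal (r ^ ρ))
    (πr : ℝ → Set (Set G))
    (hπr : ∀ r : ℝ, 0 < r → IsUniformPartition (πr r)
      (gball nm 1 (r / (4 * γ ^ 2)))
      (gball nm 1 (r / (4 * γ ^ 2)) * gball nm 1 (r / (4 * γ ^ 2))))
   (q p α : ℝ≥0∞) (hq1 : 1 ≤ q) (hqα : q ≤ α) (hαp : α ≤ p) :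
    (∀ f : G → ℂ, AEStronglyMeasurable f μ →
        alphaNorm μ nm πr q p α f ≤ eLpNorm f α μ) ∧
      ∀ f : G → ℂ, AEStronglyMeasurable f μ →
        eLpNorm f α μ < ∞ → alphaNorm μ nm πr q p α f < ∞ := by
  have hq0 : q ≠ 0 := (zero_lt_one.trans_le hq1).ne'
  have hα1 : 1 ≤ α := hq1.trans hqα
  have hα0 : α ≠ 0 := (zero_lt_one.trans_le hα1).ne'
  have hγ0 : (0:ℝ) < γ := zero_lt_one.trans_le hγ
  have key : ∀ f : G → ℂ, AEStronglyMeasurable f μ →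
      alphaNorm μ nm πr q p α f ≤ eLpNorm f α μ := by
    intro f hf
    rw [alphaNorm]
    refine iSup₂_le fun r hr => ?_
    obtain ⟨hcnt, hmeas, hdisj, hcover, hstruct⟩ := hπr r hr
    have hB0 : μ (gball nm 1 r) ≠ 0 := by
      rw [hvol r hr]
      simp [ENNReal.ofReal_eq_zero, not_le, Real.rpow_pos_of_pos hr]
    have hBtop : μ (gball nm 1 r) ≠ ∞ := by rw [hvol r hr]; exact ENNReal.ofReal_ne_top
    -- blocks have measure at most that of the ball
    have hsub : gball nm 1 (r / (4 * γ ^ 2)) * gball nm 1 (r / (4 * γ ^ 2))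
        ⊆ gball nm 1 r := by
      rintro z hz
      rw [Set.mem_mul] at hz
      obtain ⟨a, ha, b, hb, rfl⟩ := hz
      simp only [gball, mem_setOf_eq, inv_one, one_mul] at ha hb ⊢
      have h1 : nm (a * b) ≤ γ * (nm a + nm b) := hnm_mul a b
      have h2 : γ * (nm a + nm b) < γ * (r / (4 * γ ^ 2) + r / (4 * γ ^ 2)) := by
        exact mul_lt_mul_of_pos_left (add_lt_add ha hb) hγ0
      have h3 : γ * (r / (4 * γ ^ 2) + r / (4 * γ ^ 2)) = r / (2 * γ) := by
        field_simp
        ring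
      have h4 : r / (2 * γ) ≤ r := div_le_self hr.le (by nlinarith)
      linarith
    have hblock : ∀ A ∈ πr r, μ A ≤ μ (gball nm 1 r) := by
      intro A hA
      obtain ⟨x, hx, hU, hV⟩ := hstruct A hA
      calc μ A ≤ μ (x • gball nm 1 r) :=
            measure_mono (hV.trans (smul_set_mono hsub))
        _ = μ (gball nm 1 r) := by rw [measure_smul]
    set c : ℝ := q⁻¹.toReal - α⁻¹.toReal with hc
    have hc0 : 0 ≤ c := by
      rw [hc, sub_nonneg]
      exact ENNReal.toReal_mono (by simpa using hq0) (ENNReal.inv_le_inv.mpr hqα)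
    have perblock : ∀ A ∈ πr r, eLpNorm (A.indicator f) q μ ≤
        μ (gball nm 1 r) ^ c * eLpNorm (A.indicator f) α μ := by
      intro A hA
      refine (aux_holder μ (hmeas A hA) hqα hf).trans ?_
      exact mul_le_mul_left (ENNReal.rpow_le_rpow (hblock A hA) hc0) _
    have main : partNorm μ q p (πr r) f ≤ μ (gball nm 1 r) ^ c * eLpNorm f α μ := by
      by_cases hp : p = ∞
      · rw [partNorm, if_pos hp]
        refine iSup₂_le fun A hA => (perblock A hA).trans ?_
        exact mul_le_mul_right (eLpNorm_indicator_le f) _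
      · have hαtop : α ≠ ∞ := fun h => hp (top_le_iff.mp (h ▸ hαp))
        have hαt : 0 < α.toReal := ENNReal.toReal_pos hα0 hαtop
        have hpt : 0 < p.toReal :=
          ENNReal.toReal_pos (fun h => hα0 (le_zero_iff.mp (h ▸ hαp))) hp
        rw [partNorm, if_neg hp]
        calc (∑' A : πr r, eLpNorm ((A : Set G).indicator f) q μ ^ p.toReal) ^ (1 / p.toReal)
            ≤ (∑' A : πr r, (μ (gball nm 1 r) ^ c *
                eLpNorm ((A : Set G).indicator f) α μ) ^ p.toReal) ^ (1 / p.toReal) := by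
              gcongr with A
              exact perblock A A.2
          _ = μ (gball nm 1 r) ^ c *
              (∑' A : πr r, eLpNorm ((A : Set G).indicator f) α μ ^ p.toReal)
                ^ (1 / p.toReal) := by
              simp_rw [ENNReal.mul_rpow_of_nonneg _ _ hpt.le]
              rw [ENNReal.tsum_mul_left,
                ENNReal.mul_rpow_of_nonneg _ _ (by positivity : (0:ℝ) ≤ 1 / p.toReal),
                ← ENNReal.rpow_mul, mul_one_div, div_self hpt.ne', ENNReal.rpow_one]
          _ ≤ μ (gball nm 1 r) ^ c *
              (∑' A : πr r, eLpNorm ((A : Set G).indicator f) α μ ^ α.toReal)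
                ^ (1 / α.toReal) := by
              exact mul_le_mul_right
                (aux_tsum_rpow _ hαt (ENNReal.toReal_mono hp hαp)) _
          _ = μ (gball nm 1 r) ^ c * eLpNorm f α μ := by
              rw [aux_sum μ hcnt hmeas hdisj hcover hα0 hαtop f]
    calc μ (gball nm 1 r) ^ (α⁻¹.toReal - q⁻¹.toReal) * partNorm μ q p (πr r) f
        ≤ μ (gball nm 1 r) ^ (-c) * (μ (gball nm 1 r) ^ c * eLpNorm f α μ) := by
          rw [show α⁻¹.toReal - q⁻¹.toReal = -c by rw [hc]; ring]
          exact mul_le_mul_right main _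
      _ = eLpNorm f α μ := by
          rw [← mul_assoc, ← ENNReal.rpow_add _ _ hB0 hBtop, neg_add_cancel,
            ENNReal.rpow_zero, one_mul]
  exact ⟨key, fun f hf hfin => lt_of_le_of_lt (key f hf) hfin⟩
end

section
/- Let q ∈ [1,∞]. There exists a constant K = K(γ,ρ,q) > 0 such that for every measurable function f on G: K·‖f‖_q ≤ ‖f‖_{q,∞,q} ≤ ‖f‖_q. Consequently (L^q,L^∞)^q(G) = L^q(G). -/
open MeasureTheory ENNReal NNReal Set Filter Topology Pointwise

variable {G : Type*} [Group G] [TopologicalSpace G] [IsTopologicalGroup G]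
  [T2Space G] [LocallyCompactSpace G] [SigmaCompactSpace G]
  [MeasurableSpace G] [BorelSpace G]

lemma alphaNorm_eq_statement15 {G : Type*} [Group G] [TopologicalSpace G]
    [MeasurableSpace G]
    (μ : Measure G) (nm : G → ℝ) (πr : ℝ → Set (Set G)) (q : ℝ≥0∞) (f : G → ℂ) :
    alphaNorm μ nm πr q ∞ q f
      = ⨆ (r : ℝ) (_ : 0 < r), ⨆ A ∈ πr r, eLpNorm (A.indicator f) q μ := by
  simp [alphaNorm, partNorm, sub_self, ENNReal.rpow_zero, one_mul]

lemma isOpen_gball_statement15 {G : Type*} [Group G] [TopologicalSpace G]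
    [IsTopologicalGroup G] (nm : G → ℝ) (h : Continuous nm) (x : G) (r : ℝ) :
    IsOpen (gball nm x r) :=
  isOpen_lt (h.comp (continuous_mul_left x⁻¹)) continuous_const

lemma mem_gball_one_statement15 {G : Type*} [Group G] (nm : G → ℝ) (r : ℝ) (y : G) :
    y ∈ gball nm 1 r ↔ nm y < r := by
  simp [gball]

theorem statement15
    (μ : Measure G) [μ.IsHaarMeasure]
    (nm : G → ℝ) (γ ρ : ℝ)
    (hnm_cont : Continuous nm)
    (hnm_nonneg : ∀ x : G, 0 ≤ nm x)
    (hnm_zero : ∀ x : G, nm x = 0 ↔ x = 1)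
    (hnm_inv : ∀ x : G, nm x⁻¹ = nm x)
    (hγ : 1 ≤ γ)
    (hnm_mul : ∀ x y : G, nm (x * y) ≤ γ * (nm x + nm y))
    (hball_cpt : ∀ (x : G) (r : ℝ), 0 < r → IsCompact (closure (gball nm x r)))
    (hρ : 0 < ρ)
    (hvol : ∀ r : ℝ, 0 < r → μ (gball nm 1 r) = ENNReal.ofReal (r ^ ρ))
    (πr : ℝ → Set (Set G))
    (hπr : ∀ r : ℝ, 0 < r → IsUniformPartition (πr r)
      (gball nm 1 (r / (4 * γ ^ 2)))
      (gball nm 1 (r / (4 * γ ^ 2)) * gball nm 1 (r / (4 * γ ^ 2))))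
   (q : ℝ≥0∞) (hq1 : 1 ≤ q) :
    ∃ K : ℝ≥0, 0 < K ∧ ∀ f : G → ℂ, AEStronglyMeasurable f μ →
      (K : ℝ≥0∞) * eLpNorm f q μ ≤ alphaNorm μ nm πr q ∞ q f ∧
        alphaNorm μ nm πr q ∞ q f ≤ eLpNorm f q μ ∧
        (alphaNorm μ nm πr q ∞ q f < ∞ ↔ eLpNorm f q μ < ∞) := by
  have hγ0 : (0:ℝ) < γ := lt_of_lt_of_le one_pos hγ
  have key_upper : ∀ f : G → ℂ, alphaNorm μ nm πr q ∞ q f ≤ eLpNorm f q μ := by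
    intro f
    rw [alphaNorm_eq_statement15]
    exact iSup_le fun r => iSup_le fun hr => iSup_le fun A => iSup_le fun hA =>
      eLpNorm_indicator_le f
  obtain ⟨K, hK, hKle⟩ : ∃ K : ℝ≥0, 0 < K ∧ ∀ f : G → ℂ, AEStronglyMeasurable f μ →
      (K : ℝ≥0∞) * eLpNorm f q μ ≤ alphaNorm μ nm πr q ∞ q f := by
    by_cases hqt : q = ∞
    · subst hqt
      refine ⟨1, one_pos, fun f hf => ?_⟩
      rw [ENNReal.coe_one, one_mul]
      obtain ⟨hc, hm, hd, hu, hxp⟩ := hπr 1 one_pos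
      set M := ⨆ A ∈ πr 1, eLpNorm (A.indicator f) ∞ μ with hM
      have h1 : eLpNorm f ∞ μ ≤ M := by
        rw [eLpNorm_exponent_top]
        show essSup (fun y => (‖f y‖₊ : ℝ≥0∞)) μ ≤ M
        refine essSup_le_of_ae_le M ?_
        have hae : ∀ᵐ x ∂μ, ∀ A ∈ πr 1,
            (‖(A.indicator f) x‖₊ : ℝ≥0∞) ≤ eLpNorm (A.indicator f) ∞ μ := by
          rw [MeasureTheory.ae_ball_iff hc]
          intro A hA
          rw [eLpNorm_exponent_top]
          exact ENNReal.ae_le_essSup _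
        filter_upwards [hae] with x hx2
        obtain ⟨A, hA, hxA⟩ : ∃ A ∈ πr 1, x ∈ A := by
          have hx : x ∈ ⋃₀ πr 1 := hu ▸ Set.mem_univ x
          simpa using hx
        calc (‖f x‖₊ : ℝ≥0∞) = ‖(A.indicator f) x‖₊ := by
              rw [Set.indicator_of_mem hxA]
          _ ≤ eLpNorm (A.indicator f) ∞ μ := hx2 A hA
          _ ≤ M := le_biSup (fun A : Set G => eLpNorm (A.indicator f) ⊤ μ) hA
      refine h1.trans ?_
      rw [alphaNorm_eq_statement15]
      exact le_iSup₂_of_le 1 one_pos le_rfl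
    · -- q < ∞
      have hq0 : q ≠ 0 := (lt_of_lt_of_le one_pos hq1).ne'
      have ht : 0 < q.toReal := ENNReal.toReal_pos hq0 hqt
      set t := q.toReal with htdef
      set N' : ℝ≥0∞ := ENNReal.ofReal ((12 * γ ^ 4) ^ ρ) with hN'
      have h12 : (0:ℝ) < 12 * γ ^ 4 := by positivity
      have hN'0 : N' ≠ 0 := by
        simp only [hN', ne_eq, ENNReal.ofReal_eq_zero, not_le]
        exact Real.rpow_pos_of_pos h12 ρ
      have hN'top : N' ≠ ∞ := ENNReal.ofReal_ne_top
      set c : ℝ≥0∞ := N' ^ (1 / t) with hc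
      have hc0 : c ≠ 0 := (ENNReal.rpow_pos (lt_of_le_of_ne zero_le (Ne.symm hN'0)) hN'top).ne'
      have hctop : c ≠ ∞ := ENNReal.rpow_ne_top_of_nonneg (by positivity) hN'top
      refine ⟨(c⁻¹).toNNReal, ENNReal.toNNReal_pos (ENNReal.inv_ne_zero.mpr hctop)
        (ENNReal.inv_ne_top.mpr hc0), fun f hf => ?_⟩
      rw [ENNReal.coe_toNNReal (ENNReal.inv_ne_top.mpr hc0)]
      set Aα := alphaNorm μ nm πr q ∞ q f with hAαdef
      set g : G → ℝ≥0∞ := fun x => (‖f x‖₊ : ℝ≥0∞) ^ t with hg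
      have hgmeas : AEMeasurable g μ := AEMeasurable.pow_const hf.enorm t
      have hset : ∀ A : Set G, MeasurableSet A →
          ∫⁻ x in A, g x ∂μ = eLpNorm (A.indicator f) q μ ^ t := by
        intro A hA
        rw [eLpNorm_eq_lintegral_rpow_enorm_toReal hq0 hqt, ← ENNReal.rpow_mul, one_div,
          inv_mul_cancel₀ ht.ne', ENNReal.rpow_one, ← lintegral_indicator hA]
        congr 1
        funext x
        by_cases hx : x ∈ A
        · simp [hg, Set.indicator_of_mem hx, enorm_eq_nnnorm, ← htdef]
        · simp [hg, Set.indicator_of_notMem hx, ENNReal.zero_rpow_of_pos ht, enorm_eq_nnnorm, ← htdef]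
      have hAα_ge : ∀ r : ℝ, 0 < r → ∀ A ∈ πr r, eLpNorm (A.indicator f) q μ ≤ Aα := by
        intro r hr A hA
        rw [hAαdef, alphaNorm_eq_statement15]
        exact le_iSup₂_of_le r hr (le_biSup (fun A : Set G => eLpNorm (A.indicator f) q μ) hA)
      -- key counting estimate
      have hball : ∀ r : ℝ, 0 < r → ∫⁻ x in gball nm 1 r, g x ∂μ ≤ N' * Aα ^ t := by
        intro r hr
        obtain ⟨hcnt, hm, hd, hu, hxp⟩ := hπr r hr
        set s : ℝ := r / (4 * γ ^ 2) with hsdef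
        have hs : 0 < s := by positivity
        set U : Set G := gball nm 1 s with hU
        set S : Set (Set G) := {A ∈ πr r | (A ∩ gball nm 1 r).Nonempty} with hS
        have hSsub : S ⊆ πr r := Set.sep_subset _ _
        have hSc : S.Countable := hcnt.mono hSsub
        haveI := hSc.to_subtype
        have hch : ∀ A : Set G, A ∈ S → ∃ x : G, x • U ⊆ A ∧ nm x < γ * r + r / 2 := by
          intro A hA
          obtain ⟨x, hxA, hxU, hxV⟩ := hxp A hA.1
          obtain ⟨y, hyA, hyB⟩ := hA.2
          refine ⟨x, hxU, ?_⟩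
          have hy : x⁻¹ * y ∈ U * U := by
            have := hxV hyA
            rw [mem_smul_set_iff_inv_smul_mem, smul_eq_mul] at this
            exact this
          obtain ⟨u, hu1, v, hv1, huv⟩ := Set.mem_mul.mp hy
          rw [mem_gball_one_statement15] at hu1 hv1
          rw [mem_gball_one_statement15] at hyB
          have h1 : nm (x⁻¹ * y) ≤ γ * (nm u + nm v) := huv ▸ hnm_mul u v
          have h2 : nm x ≤ γ * (nm y + nm (x⁻¹ * y)) := by
            have hx' : x = y * (x⁻¹ * y)⁻¹ := by group
            calc nm x = nm (y * (x⁻¹ * y)⁻¹) := by rw [← hx']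
              _ ≤ γ * (nm y + nm (x⁻¹ * y)⁻¹) := hnm_mul _ _
              _ = γ * (nm y + nm (x⁻¹ * y)) := by rw [hnm_inv]
          have hnn := hnm_nonneg (x⁻¹ * y)
          have hsum2 : nm u + nm v < 2 * s := by linarith
          have hstep : nm (x⁻¹ * y) < r / (2 * γ) := by
            have h3 : γ * (nm u + nm v) < γ * (2 * s) :=
              mul_lt_mul_of_pos_left hsum2 hγ0
            have h4 : γ * (2 * s) = r / (2 * γ) := by
              rw [hsdef]; field_simp; ring
            linarith
          have h5 : γ * (nm y + nm (x⁻¹ * y)) < γ * (r + r / (2 * γ)) :=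
            mul_lt_mul_of_pos_left (add_lt_add hyB hstep) hγ0
          have h6 : γ * (r + r / (2 * γ)) = γ * r + r / 2 := by
            field_simp
          linarith
        choose xc hxc1 hxc2 using hch
        set F : S → Set G := fun p => xc p.1 p.2 • U with hF
        have hFsub : ∀ p : S, F p ⊆ (p : Set G) := fun p => hxc1 p.1 p.2
        have hFdisj : Pairwise (Function.onFun Disjoint F) := by
          intro p q hpq
          have hne : (p : Set G) ≠ (q : Set G) := fun h => hpq (Subtype.ext h)
          exact Disjoint.mono (hFsub p) (hFsub q)
            (hd (hSsub p.2) (hSsub q.2) hne)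
        have hUopen : IsOpen U := isOpen_gball_statement15 nm hnm_cont 1 s
        have hFmeas : ∀ p : S, MeasurableSet (F p) :=
          fun p => (hUopen.smul _).measurableSet
        have hFvol : ∀ p : S, μ (F p) = ENNReal.ofReal (s ^ ρ) := by
          intro p
          rw [hF]
          rw [measure_smul]
          exact hvol s hs
        have hFsubB : ∀ p : S, F p ⊆ gball nm 1 (3 * γ ^ 2 * r) := by
          intro p z hz
          rw [mem_smul_set_iff_inv_smul_mem, smul_eq_mul] at hz
          rw [mem_gball_one_statement15] at hz ⊢
          set x := xc p.1 p.2
          have hxb := hxc2 p.1 p.2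
          have h1 : nm z ≤ γ * (nm x + nm (x⁻¹ * z)) := by
            have hz' : z = x * (x⁻¹ * z) := by group
            calc nm z = nm (x * (x⁻¹ * z)) := by rw [← hz']
              _ ≤ γ * (nm x + nm (x⁻¹ * z)) := hnm_mul _ _
          have hnn := hnm_nonneg x
          have hs' : s = r / (4 * γ ^ 2) := hsdef
          have hγ2 : (0:ℝ) < 4 * γ ^ 2 := by positivity
          rw [hs'] at hz
          calc nm z ≤ γ * (nm x + nm (x⁻¹ * z)) := h1
            _ < γ * ((γ * r + r / 2) + r / (4 * γ ^ 2)) := by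
                apply mul_lt_mul_of_pos_left _ hγ0
                exact add_lt_add hxb hz
            _ ≤ γ * ((γ * r + r / 2) + r) := by
                have e : r / (4 * γ ^ 2) ≤ r := by
                  rw [div_le_iff₀ hγ2]; nlinarith
                exact mul_le_mul_of_nonneg_left (by linarith) hγ0.le
            _ ≤ 3 * γ ^ 2 * r := by
                nlinarith [sq_nonneg (γ - 1), mul_pos hγ0 hr]
        set v : ℝ≥0∞ := ENNReal.ofReal (s ^ ρ) with hv
        have hv0 : v ≠ 0 := by
          simp only [hv, ne_eq, ENNReal.ofReal_eq_zero, not_le]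
          exact Real.rpow_pos_of_pos hs ρ
        have hvtop : v ≠ ∞ := ENNReal.ofReal_ne_top
        have h3r : (0:ℝ) < 3 * γ ^ 2 * r := by positivity
        have hBvol : μ (gball nm 1 (3 * γ ^ 2 * r)) = N' * v := by
          rw [hvol _ h3r, hN', hv, ← ENNReal.ofReal_mul (by positivity), ← Real.mul_rpow
            (by positivity) (by positivity)]
          congr 2
          rw [hsdef]
          field_simp
          ring
        have hsum : ∑' p : S, μ (F p) ≤ N' * v := by
          rw [← measure_iUnion hFdisj hFmeas, ← hBvol]
          exact measure_mono (Set.iUnion_subset hFsubB)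
        have hSfin : S.Finite := by
          by_contra hinf
          haveI : Infinite S := Set.infinite_coe_iff.mpr hinf
          have : ∑' p : S, μ (F p) = ∞ := by
            have : ∀ p : S, μ (F p) = v := hFvol
            rw [tsum_congr this]
            exact ENNReal.tsum_const_eq_top_of_ne_zero hv0
          rw [this] at hsum
          exact (lt_of_le_of_lt hsum (ENNReal.mul_lt_top hN'top.lt_top
            hvtop.lt_top)).ne rfl
        haveI hSfint : Fintype S := hSfin.fintype
        have hcard : (Fintype.card S : ℝ≥0∞) ≤ N' := by
          have h1 : ∑' p : S, μ (F p) = (Fintype.card S : ℝ≥0∞) * v := by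
            rw [tsum_congr hFvol, tsum_fintype]
            simp [Finset.sum_const, nsmul_eq_mul]
          rw [h1] at hsum
          exact (ENNReal.mul_le_mul_iff_left hv0 hvtop).mp hsum
        have hcover : gball nm 1 r ⊆ ⋃ p : S, (p : Set G) := by
          intro x hx
          obtain ⟨A, hA, hxA⟩ : ∃ A ∈ πr r, x ∈ A := by
            have hx' : x ∈ ⋃₀ πr r := hu ▸ Set.mem_univ x
            simpa using hx'
          exact Set.mem_iUnion.mpr ⟨⟨A, hA, ⟨x, hxA, hx⟩⟩, hxA⟩
        calc ∫⁻ x in gball nm 1 r, g x ∂μ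
            ≤ ∫⁻ x in ⋃ p : S, (p : Set G), g x ∂μ := lintegral_mono_set hcover
          _ ≤ ∑' p : S, ∫⁻ x in (p : Set G), g x ∂μ := lintegral_iUnion_le _ _
          _ ≤ ∑' _ : S, Aα ^ t := by
              refine ENNReal.tsum_le_tsum fun p => ?_
              rw [hset _ (hm _ (hSsub p.2))]
              exact ENNReal.rpow_le_rpow (hAα_ge r hr _ (hSsub p.2)) ht.le
          _ = (Fintype.card S : ℝ≥0∞) * Aα ^ t := by
              rw [tsum_fintype]
              simp [Finset.sum_const, nsmul_eq_mul]
          _ ≤ N' * Aα ^ t := mul_le_mul_left hcard _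
      -- monotone convergence over balls
      have hglob : ∫⁻ x, g x ∂μ ≤ N' * Aα ^ t := by
        set fn : ℕ → G → ℝ≥0∞ := fun n => (gball nm 1 (n + 1)).indicator g with hfn
        have hmeasB : ∀ n : ℕ, MeasurableSet (gball nm 1 ((n : ℝ) + 1)) :=
          fun n => (isOpen_gball_statement15 nm hnm_cont 1 _).measurableSet
        have hfnmeas : ∀ n, AEMeasurable (fn n) μ :=
          fun n => hgmeas.indicator (hmeasB n)
        have hfnmono : ∀ x, Monotone fun n => fn n x := by
          intro x n m hnm
          refine Set.indicator_le_indicator_of_subset ?_ (fun _ => zero_le) x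
          intro y hy
          rw [mem_gball_one_statement15] at hy ⊢
          have : (n : ℝ) ≤ m := Nat.cast_le.mpr hnm
          linarith
        have hfnsup : ∀ x, ⨆ n, fn n x = g x := by
          intro x
          refine le_antisymm (iSup_le fun n => Set.indicator_le_self _ _ x) ?_
          obtain ⟨n, hn⟩ := exists_nat_gt (nm x)
          refine le_iSup_of_le n ?_
          simp only [hfn]
          have hx : x ∈ gball nm 1 ((n : ℝ) + 1) := by
            rw [mem_gball_one_statement15]; linarith
          rw [Set.indicator_of_mem hx]
        have h1 : ∫⁻ x, g x ∂μ = ⨆ n : ℕ, ∫⁻ x in gball nm 1 ((n : ℝ) + 1), g x ∂μ := by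
          calc ∫⁻ x, g x ∂μ = ∫⁻ x, ⨆ n, fn n x ∂μ := by
                congr 1; funext x; rw [hfnsup]
            _ = ⨆ n, ∫⁻ x, fn n x ∂μ :=
                lintegral_iSup' hfnmeas (Filter.Eventually.of_forall hfnmono)
            _ = ⨆ n : ℕ, ∫⁻ x in gball nm 1 ((n : ℝ) + 1), g x ∂μ := by
                refine iSup_congr fun n => ?_
                simp only [hfn]
                exact lintegral_indicator (hmeasB n) g
        rw [h1]
        exact iSup_le fun n => hball _ (by positivity)
      -- conclude
      have hfinal : eLpNorm f q μ ≤ c * Aα := by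
        rw [eLpNorm_eq_lintegral_rpow_enorm_toReal hq0 hqt]
        have h2 : (∫⁻ x, (‖f x‖₊ : ℝ≥0∞) ^ t ∂μ) ^ (1 / t) ≤ (N' * Aα ^ t) ^ (1 / t) :=
          ENNReal.rpow_le_rpow hglob (by positivity)
        calc (∫⁻ x, (‖f x‖₊ : ℝ≥0∞) ^ q.toReal ∂μ) ^ (1 / q.toReal)
            ≤ (N' * Aα ^ t) ^ (1 / t) := h2
          _ = c * Aα := by
              rw [ENNReal.mul_rpow_of_nonneg _ _ (by positivity), ← ENNReal.rpow_mul,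
                mul_one_div_cancel ht.ne', ENNReal.rpow_one, hc]
      calc c⁻¹ * eLpNorm f q μ ≤ c⁻¹ * (c * Aα) := mul_le_mul_right hfinal _
        _ = Aα := by rw [← mul_assoc, ENNReal.inv_mul_cancel hc0 hctop, one_mul]
  refine ⟨K, hK, fun f hf => ?_⟩
  have h1 := hKle f hf
  have h2 := key_upper f
  refine ⟨h1, h2, ⟨fun hA => ?_, fun hE => lt_of_le_of_lt h2 hE⟩⟩
  have hK0 : (K : ℝ≥0∞) ≠ 0 := ENNReal.coe_ne_zero.mpr hK.ne'
  have heq : eLpNorm f q μ = (K : ℝ≥0∞)⁻¹ * ((K : ℝ≥0∞) * eLpNorm f q μ) := by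
    rw [← mul_assoc, ENNReal.inv_mul_cancel hK0 ENNReal.coe_ne_top, one_mul]
  rw [heq]
  exact ENNReal.mul_lt_top (ENNReal.inv_lt_top.mpr (lt_of_le_of_ne zero_le (Ne.symm hK0)))
    (lt_of_le_of_lt h1 hA)
end

section
/- Let (q,p,α) ∈ [1,∞]³ with q < α < p. There exists a constant C = C(q,p,α,ρ,γ) > 0 such that for every measurable function f on G: ‖f‖_{q,p,α} ≤ C·‖f‖*_{α,∞}. Consequently the weak Lorentz space L^{α,∞}(G) is contained in (L^q,L^p)^α(G). -/
open MeasureTheory ENNReal NNReal Set Filter Topology Pointwise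

variable {G : Type*} [Group G] [TopologicalSpace G] [IsTopologicalGroup G]
  [T2Space G] [LocallyCompactSpace G] [SigmaCompactSpace G]
  [MeasurableSpace G] [BorelSpace G]

lemma aux_dist {G : Type*} [MeasurableSpace G] (μ : Measure G) (α : ℝ≥0∞) (f : G → ℂ)
    (aa : ℝ) (haa : 0 < aa) (haeq : α⁻¹.toReal = aa⁻¹)
    (s : ℝ≥0∞) (hs0 : s ≠ 0) (hst : s ≠ ∞) :
    μ {x | s < (‖f x‖₊ : ℝ≥0∞)} ≤ weakNorm μ α f ^ aa * s ^ (-aa) := by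
  by_contra hcon
  push_neg at hcon
  obtain ⟨t, ht1, ht2⟩ := exists_between hcon
  have ht0 : t ≠ 0 := fun h => by simp [h] at ht1
  have htt : t ≠ ∞ := ht2.ne_top
  have hre : s ≤ rearr μ f t := by
    refine le_sInf fun u hu => ?_
    by_contra hus
    push_neg at hus
    exact absurd (le_trans (measure_mono (fun x hx => lt_trans hus hx)) hu.2) ht2.not_ge
  have hW : t ^ α⁻¹.toReal * rearr μ f t ≤ weakNorm μ α f := by
    refine le_iSup_of_le t ?_
    rw [iSup_pos (pos_iff_ne_zero.2 ht0), iSup_pos htt]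
  have h1 : t ^ aa⁻¹ * s ≤ weakNorm μ α f := by
    rw [← haeq]
    exact le_trans (mul_le_mul_right hre _) hW
  have h2 : t ^ aa⁻¹ ≤ weakNorm μ α f / s :=
    (ENNReal.le_div_iff_mul_le (Or.inl hs0) (Or.inl hst)).2 h1
  have h3 : t ≤ (weakNorm μ α f / s) ^ aa := by
    calc t = (t ^ aa⁻¹) ^ aa := by
            rw [← ENNReal.rpow_mul, inv_mul_cancel₀ haa.ne', ENNReal.rpow_one]
      _ ≤ _ := ENNReal.rpow_le_rpow h2 haa.le
  rw [ENNReal.div_rpow_of_nonneg _ _ haa.le, div_eq_mul_inv, ← ENNReal.rpow_neg] at h3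
  exact absurd h3 ht1.not_ge


lemma aux_core {G : Type*} [MeasurableSpace G] (μ : Measure G) (f : G → ℂ)
    (hf : AEMeasurable f μ)
    (qq aa : ℝ) (hqq : 0 < qq) (hqa : qq < aa)
    (c : ℝ≥0∞) (hc0 : c ≠ 0) (hct : c ≠ ∞)
    (hD : ∀ s : ℝ≥0∞, s ≠ 0 → s ≠ ∞ → μ {x | s < (‖f x‖₊ : ℝ≥0∞)} ≤ c * s ^ (-aa))
    (S : Set G) (M : ℝ≥0∞) (hSM : μ S ≤ M) (hMt : M ≠ ∞) :
    ∫⁻ x in S, (‖f x‖₊ : ℝ≥0∞) ^ qq ∂μ ≤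
      ENNReal.ofReal (1 + 1 / (aa / qq - 1)) * c ^ (qq / aa) * M ^ (1 - qq / aa) := by
  rcases eq_or_ne M 0 with hM0 | hM0
  · have hS0 : μ S = 0 := le_antisymm (hM0 ▸ hSM) (zero_le)
    rw [setLIntegral_measure_zero _ _ hS0]
    exact zero_le
  -- setup
  have haa : 0 < aa := hqq.trans hqa
  set b : ℝ := aa / qq with hbdef
  have hb1 : 1 < b := (one_lt_div hqq).2 hqa
  have hb0 : 0 < b := zero_lt_one.trans hb1
  set Mr : ℝ := M.toReal with hMrdef
  have hMr : 0 < Mr := ENNReal.toReal_pos hM0 hMt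
  set cr : ℝ := c.toReal with hcrdef
  have hcr : 0 < cr := ENNReal.toReal_pos hc0 hct
  set t₀ : ℝ := (cr / Mr) ^ (1 / b) with ht₀def
  have ht₀ : 0 < t₀ := Real.rpow_pos_of_pos (div_pos hcr hMr) _
  -- rewrite integrand and layercake
  have hrw : ∫⁻ x in S, (‖f x‖₊ : ℝ≥0∞) ^ qq ∂μ
      = ∫⁻ t in Ioi (0:ℝ), (μ.restrict S) {x | t < ‖f x‖ ^ qq} := by
    rw [← lintegral_eq_lintegral_meas_lt (μ.restrict S)
      (Eventually.of_forall fun x => Real.rpow_nonneg (norm_nonneg _) _)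
      ((Real.continuous_rpow_const hqq.le).measurable.comp_aemeasurable (hf.norm.restrict))]
    refine lintegral_congr fun x => ?_
    rw [← enorm_eq_nnnorm, ← ofReal_norm_eq_enorm, ← ENNReal.ofReal_rpow_of_nonneg (norm_nonneg _) hqq.le]
  rw [hrw, ← Ioc_union_Ioi_eq_Ioi ht₀.le, lintegral_union measurableSet_Ioi Ioc_disjoint_Ioi_same]
  have hpiece1 : ∫⁻ t in Ioc (0:ℝ) t₀, (μ.restrict S) {x | t < ‖f x‖ ^ qq} ≤ M * ENNReal.ofReal t₀ := by
    calc ∫⁻ t in Ioc (0:ℝ) t₀, (μ.restrict S) {x | t < ‖f x‖ ^ qq}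
        ≤ ∫⁻ _ in Ioc (0:ℝ) t₀, M := by
          refine lintegral_mono fun t => ?_
          exact le_trans (le_trans (measure_mono (subset_univ _)) (by rw [Measure.restrict_apply_univ])) hSM
      _ = M * ENNReal.ofReal t₀ := by rw [setLIntegral_const, Real.volume_Ioc, sub_zero]
  have hpiece2 : ∫⁻ t in Ioi t₀, (μ.restrict S) {x | t < ‖f x‖ ^ qq}
      ≤ c * ENNReal.ofReal (t₀ ^ (1 - b) / (b - 1)) := by
    have hbnd : ∀ t ∈ Ioi t₀, (μ.restrict S) {x | t < ‖f x‖ ^ qq} ≤ c * ENNReal.ofReal (t ^ (-b)) := by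
      intro t ht
      have ht0 : 0 < t := ht₀.trans ht
      have hset : {x | t < ‖f x‖ ^ qq} ⊆ {x | ENNReal.ofReal (t ^ (1/qq)) < (‖f x‖₊ : ℝ≥0∞)} := by
        intro x hx
        have h1 : t ^ (1/qq) < ‖f x‖ := by
          have := Real.rpow_lt_rpow ht0.le hx (by positivity : (0:ℝ) < 1/qq)
          rwa [← Real.rpow_mul (norm_nonneg _), mul_one_div_cancel hqq.ne', Real.rpow_one] at this
        simp only [mem_setOf_eq, ← enorm_eq_nnnorm, ← ofReal_norm_eq_enorm]
        exact (ENNReal.ofReal_lt_ofReal_iff ((Real.rpow_pos_of_pos ht0 _).trans h1)).2 h1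
      have hs0 : ENNReal.ofReal (t ^ (1/qq)) ≠ 0 := by
        simp [ENNReal.ofReal_eq_zero, not_le, Real.rpow_pos_of_pos ht0]
      calc (μ.restrict S) {x | t < ‖f x‖ ^ qq}
          ≤ μ {x | ENNReal.ofReal (t ^ (1/qq)) < (‖f x‖₊ : ℝ≥0∞)} :=
            le_trans (Measure.restrict_le_self _) (measure_mono hset)
        _ ≤ c * ENNReal.ofReal (t ^ (1/qq)) ^ (-aa) := hD _ hs0 ENNReal.ofReal_ne_top
        _ = c * ENNReal.ofReal (t ^ (-b)) := by
            rw [ENNReal.ofReal_rpow_of_pos (Real.rpow_pos_of_pos ht0 _),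
              ← Real.rpow_mul ht0.le]
            rw [hbdef]
            ring_nf
    calc ∫⁻ t in Ioi t₀, (μ.restrict S) {x | t < ‖f x‖ ^ qq}
        ≤ ∫⁻ t in Ioi t₀, c * ENNReal.ofReal (t ^ (-b)) := setLIntegral_mono' measurableSet_Ioi hbnd
      _ = c * ∫⁻ t in Ioi t₀, ENNReal.ofReal (t ^ (-b)) := lintegral_const_mul' _ _ hct
      _ = c * ENNReal.ofReal (t₀ ^ (1 - b) / (b - 1)) := by
          congr 1
          rw [← ofReal_integral_eq_lintegral_ofReal
            (integrableOn_Ioi_rpow_of_lt (by linarith) ht₀)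
            (by filter_upwards [ae_restrict_mem measurableSet_Ioi] with t ht;
                exact Real.rpow_nonneg (ht₀.trans ht).le _)]
          rw [integral_Ioi_rpow_of_lt (by linarith) ht₀]
          congr 1
          rw [neg_div, ← div_neg, neg_add', neg_neg]
          ring_nf
  refine le_trans (add_le_add hpiece1 hpiece2) ?_
  -- final arithmetic
  have hb1' : (0:ℝ) < b - 1 := by linarith
  have hbe : qq / aa = 1/b := by rw [hbdef, one_div_div]
  have ht₀rw : t₀ = cr ^ (1/b) / Mr ^ (1/b) := by
    rw [ht₀def, Real.div_rpow hcr.le hMr.le]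
  have hid1 : Mr * t₀ = cr ^ (1/b) * Mr ^ (1 - 1/b) := by
    rw [ht₀rw]
    simp only [Real.rpow_sub hMr, Real.rpow_one]
    have hMb : (0:ℝ) < Mr ^ (1/b) := Real.rpow_pos_of_pos hMr _
    field_simp
  have hid2 : cr * (t₀ ^ (1 - b) / (b - 1)) = (1/(b-1)) * (cr ^ (1/b) * Mr ^ (1 - 1/b)) := by
    have h1 : t₀ ^ (1-b) = cr ^ (1/b-1) / Mr ^ (1/b-1) := by
      rw [ht₀def, ← Real.rpow_mul (div_pos hcr hMr).le, ← Real.div_rpow hcr.le hMr.le]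
      congr 1
      field_simp
    rw [h1]
    simp only [Real.rpow_sub hcr, Real.rpow_sub hMr, Real.rpow_one]
    have hcb : (0:ℝ) < cr ^ (1/b) := Real.rpow_pos_of_pos hcr _
    have hMb : (0:ℝ) < Mr ^ (1/b) := Real.rpow_pos_of_pos hMr _
    set X := cr ^ (1/b)
    set Y := Mr ^ (1/b)
    field_simp
  have hlhs : M * ENNReal.ofReal t₀ + c * ENNReal.ofReal (t₀ ^ (1-b) / (b-1))
      = ENNReal.ofReal ((1 + 1/(b-1)) * (cr ^ (1/b) * Mr ^ (1-1/b))) := by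
    rw [← ENNReal.ofReal_toReal hMt, ← ENNReal.ofReal_toReal hct, ← hcrdef, ← hMrdef,
      ← ENNReal.ofReal_mul hMr.le, ← ENNReal.ofReal_mul hcr.le,
      ← ENNReal.ofReal_add (by positivity) (by positivity), hid1, hid2]
    congr 1
    ring
  have hrhs : ENNReal.ofReal (1 + 1/(b - 1)) * c ^ (qq/aa) * M ^ (1 - qq/aa)
      = ENNReal.ofReal ((1 + 1/(b-1)) * (cr ^ (1/b) * Mr ^ (1-1/b))) := by
    rw [hbe, ← ENNReal.ofReal_toReal hct, ← ENNReal.ofReal_toReal hMt, ← hcrdef, ← hMrdef,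
      ENNReal.ofReal_rpow_of_pos hcr, ENNReal.ofReal_rpow_of_pos hMr,
      ← ENNReal.ofReal_mul (by positivity), ← ENNReal.ofReal_mul (by positivity)]
    congr 1
    ring
  rw [hlhs, hrhs]
theorem statement18
    (μ : Measure G) [μ.IsHaarMeasure]
    (nm : G → ℝ) (γ ρ : ℝ)
    (hnm_cont : Continuous nm)
    (hnm_nonneg : ∀ x : G, 0 ≤ nm x)
    (hnm_zero : ∀ x : G, nm x = 0 ↔ x = 1)
    (hnm_inv : ∀ x : G, nm x⁻¹ = nm x)
    (hγ : 1 ≤ γ)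
    (hnm_mul : ∀ x y : G, nm (x * y) ≤ γ * (nm x + nm y))
    (hball_cpt : ∀ (x : G) (r : ℝ), 0 < r → IsCompact (closure (gball nm x r)))
    (hρ : 0 < ρ)
    (hvol : ∀ r : ℝ, 0 < r → μ (gball nm 1 r) = ENNReal.ofReal (r ^ ρ))
    (πr : ℝ → Set (Set G))
    (hπr : ∀ r : ℝ, 0 < r → IsUniformPartition (πr r)
      (gball nm 1 (r / (4 * γ ^ 2)))
      (gball nm 1 (r / (4 * γ ^ 2)) * gball nm 1 (r / (4 * γ ^ 2))))
   (q p α : ℝ≥0∞) (hq1 : 1 ≤ q) (hqα : q < α) (hαp : α < p) :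
    ∃ C : ℝ≥0, 0 < C ∧
      (∀ f : G → ℂ, AEStronglyMeasurable f μ →
          alphaNorm μ nm πr q p α f ≤ (C : ℝ≥0∞) * weakNorm μ α f) ∧
        ∀ f : G → ℂ, AEStronglyMeasurable f μ →
          weakNorm μ α f < ∞ → alphaNorm μ nm πr q p α f < ∞ := by
  classical
  have hq0 : q ≠ 0 := (lt_of_lt_of_le zero_lt_one hq1).ne'
  have hαt : α ≠ ∞ := hαp.ne_top
  have hqt : q ≠ ∞ := hqα.ne_top
  have hp0 : p ≠ 0 := (lt_of_lt_of_le (lt_of_lt_of_le zero_lt_one hq1) (hqα.trans hαp).le).ne'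
  set qq := q.toReal with hqqdef
  set aa := α.toReal with haadef
  set pp := p.toReal with hppdef
  have hqq1 : (1:ℝ) ≤ qq := by
    rw [hqqdef, ← ENNReal.toReal_one]
    exact (ENNReal.toReal_le_toReal one_ne_top hqt).2 hq1
  have hqq0 : (0:ℝ) < qq := lt_of_lt_of_le one_pos hqq1
  have hqa : qq < aa := (ENNReal.toReal_lt_toReal hqt hαt).2 hqα
  have haa0 : (0:ℝ) < aa := hqq0.trans hqa
  have hainv : α⁻¹.toReal = aa⁻¹ := ENNReal.toReal_inv α
  have hqinv : q⁻¹.toReal = qq⁻¹ := ENNReal.toReal_inv q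
  have hqadiv : qq / aa < 1 := (div_lt_one haa0).2 hqa
  have hqadiv0 : (0:ℝ) ≤ qq / aa := div_nonneg hqq0.le haa0.le
  have haqdiv0 : (0:ℝ) ≤ aa / qq := div_nonneg haa0.le hqq0.le
  have h1qq : (0:ℝ) ≤ 1 / qq := (one_div_pos.2 hqq0).le
  set K₁ := ENNReal.ofReal (1 + 1 / (aa / qq - 1)) with hK₁def
  have hK₁pos : (0:ℝ) < 1 + 1 / (aa / qq - 1) := by
    have hb1 : 1 < aa / qq := (one_lt_div hqq0).2 hqa
    have h0 : (0:ℝ) < aa / qq - 1 := by linarith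
    positivity
  have hK₁0 : K₁ ≠ 0 := (ENNReal.ofReal_pos.2 hK₁pos).ne'
  have hK₁t : K₁ ≠ ∞ := ENNReal.ofReal_ne_top
  set u : ℝ≥0∞ := (2:ℝ≥0∞)⁻¹ ^ (pp - aa) with hudef
  set CC : ℝ≥0∞ := if p = ∞ then K₁ ^ (1/qq) else 2 * ((1 - u)⁻¹) ^ (1/pp) * K₁ ^ (1/qq)
    with hCCdef
  have hK₁r0 : K₁ ^ (1/qq) ≠ 0 := by simp [ENNReal.rpow_eq_zero_iff, hK₁0, hK₁t]
  have hK₁rt : K₁ ^ (1/qq) ≠ ∞ := ENNReal.rpow_ne_top_of_nonneg h1qq hK₁t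
  have hu1 : p ≠ ∞ → u < 1 := by
    intro h
    have hppa : aa < pp := (ENNReal.toReal_lt_toReal hαt h).2 hαp
    rw [hudef]
    exact ENNReal.rpow_lt_one (by norm_num) (by linarith)
  have hgeo_t : p ≠ ∞ → (1 - u)⁻¹ ≠ ∞ := fun h =>
    ENNReal.inv_ne_top.2 (by simp [tsub_eq_zero_iff_le, (hu1 h).not_ge])
  have hgeo_0 : (1 - u)⁻¹ ≠ 0 := ENNReal.inv_ne_zero.2 (by
    exact ne_top_of_le_ne_top one_ne_top tsub_le_self)
  have hCC0 : CC ≠ 0 := by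
    rw [hCCdef]
    split_ifs with h
    · exact hK₁r0
    · have hppa : aa < pp := (ENNReal.toReal_lt_toReal hαt h).2 hαp
      have hpp0 : (0:ℝ) < pp := haa0.trans hppa
      refine mul_ne_zero (mul_ne_zero two_ne_zero ?_) hK₁r0
      simp [ENNReal.rpow_eq_zero_iff, hgeo_0, hgeo_t h]
  have hCCt : CC ≠ ∞ := by
    rw [hCCdef]
    split_ifs with h
    · exact hK₁rt
    · have hppa : aa < pp := (ENNReal.toReal_lt_toReal hαt h).2 hαp
      have hpp0 : (0:ℝ) < pp := haa0.trans hppa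
      refine ENNReal.mul_ne_top (ENNReal.mul_ne_top (by norm_num) ?_) hK₁rt
      exact ENNReal.rpow_ne_top_of_nonneg (one_div_pos.2 hpp0).le (hgeo_t h)
  suffices h : ∀ f : G → ℂ, AEStronglyMeasurable f μ →
      alphaNorm μ nm πr q p α f ≤ CC * weakNorm μ α f by
    have hle : CC ≤ ((max 1 CC.toNNReal : ℝ≥0) : ℝ≥0∞) := by
      conv_lhs => rw [← ENNReal.coe_toNNReal hCCt]
      exact ENNReal.coe_le_coe.2 (le_max_right _ _)
    refine ⟨max 1 CC.toNNReal, lt_of_lt_of_le one_pos (le_max_left _ _),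
      fun f hf => (h f hf).trans (mul_le_mul_left hle _), fun f hf hW => ?_⟩
    refine lt_of_le_of_lt ((h f hf).trans (mul_le_mul_left hle _)) ?_
    exact ENNReal.mul_lt_top ENNReal.coe_lt_top hW
  intro f hf
  set W := weakNorm μ α f with hWdef
  by_cases hWt : W = ∞
  · rw [hWt, ENNReal.mul_top hCC0]
    exact le_top
  by_cases hW0 : W = 0
  · -- f vanishes a.e., so alphaNorm is zero
    have hDzero : ∀ s : ℝ≥0∞, s ≠ 0 → s ≠ ∞ → μ {x | s < (‖f x‖₊ : ℝ≥0∞)} = 0 := by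
      intro s h1 h2
      refine le_antisymm ?_ (zero_le)
      have := aux_dist μ α f aa haa0 hainv s h1 h2
      rwa [← hWdef, hW0, ENNReal.zero_rpow_of_pos haa0, zero_mul] at this
    have hf0 : f =ᵐ[μ] 0 := by
      rw [Filter.EventuallyEq, ae_iff]
      refine measure_mono_null (fun x hx => ?_)
        (measure_iUnion_null fun n : ℕ =>
          hDzero (((n+1:ℕ) : ℝ≥0∞))⁻¹
            (ENNReal.inv_ne_zero.2 (ENNReal.natCast_ne_top _))
            (ENNReal.inv_ne_top.2 (by exact_mod_cast Nat.succ_ne_zero n)))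
      have hxne : f x ≠ 0 := by simpa using hx
      have hx0 : (0:ℝ≥0∞) < ‖f x‖₊ := by
        exact_mod_cast nnnorm_pos.2 hxne
      obtain ⟨n, hn⟩ := ENNReal.exists_inv_nat_lt hx0.ne'
      refine mem_iUnion.2 ⟨n, ?_⟩
      have hle : (((n+1:ℕ)):ℝ≥0∞)⁻¹ ≤ ((n:ℕ):ℝ≥0∞)⁻¹ :=
        ENNReal.inv_le_inv.2 (by exact_mod_cast Nat.le_succ n)
      exact lt_of_le_of_lt hle hn
    have hzero : alphaNorm μ nm πr q p α f = 0 := by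
      refine le_antisymm ?_ (zero_le)
      simp only [alphaNorm]
      refine iSup_le fun r => iSup_le fun hr => ?_
      have hind : ∀ A : Set G, eLpNorm (A.indicator f) q μ = 0 := by
        intro A
        have hAe : A.indicator f =ᵐ[μ] 0 :=
          hf0.mono fun x hx => by simp [Set.indicator_apply, hx]
        rw [eLpNorm_congr_ae hAe, eLpNorm_zero]
      have hpn : partNorm μ q p (πr r) f = 0 := by
        simp only [partNorm]
        split_ifs with h
        · simp [hind]
        · have hpp0' : (0:ℝ) < p.toReal := ENNReal.toReal_pos hp0 h
          simp [hind, ENNReal.zero_rpow_of_pos, hpp0', one_div_pos.2 hpp0']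
      rw [hpn, mul_zero]
    rw [hzero]
    exact zero_le
  -- main case
  set c := W ^ aa with hcdef
  have hc0 : c ≠ 0 := by
    rw [hcdef]
    simp [ENNReal.rpow_eq_zero_iff, hW0, hWt]
  have hct : c ≠ ∞ := ENNReal.rpow_ne_top_of_nonneg haa0.le hWt
  have hDist : ∀ s : ℝ≥0∞, s ≠ 0 → s ≠ ∞ → μ {x | s < (‖f x‖₊ : ℝ≥0∞)} ≤ c * s ^ (-aa) :=
    fun s h1 h2 => aux_dist μ α f aa haa0 hainv s h1 h2
  have hfm : AEMeasurable f μ := hf.aemeasurable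
  simp only [alphaNorm]
  refine iSup_le fun r => iSup_le fun hr => ?_
  obtain ⟨hcnt, hmeas, hdisj, hcover, hunif⟩ := hπr r hr
  set m := μ (gball nm 1 r) with hmdef
  have hmval : m = ENNReal.ofReal (r ^ ρ) := hvol r hr
  have hm0 : m ≠ 0 := by
    rw [hmval]
    simp only [ne_eq, ENNReal.ofReal_eq_zero, not_le]
    exact Real.rpow_pos_of_pos hr ρ
  have hmt : m ≠ ∞ := by rw [hmval]; exact ENNReal.ofReal_ne_top
  have hγ0 : (0:ℝ) < γ := lt_of_lt_of_le one_pos hγ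
  have hsubUU : gball nm 1 (r/(4*γ^2)) * gball nm 1 (r/(4*γ^2)) ⊆ gball nm 1 r := by
    intro y hy
    obtain ⟨v1, hv1, v2, hv2, rfl⟩ := hy
    simp only [gball, mem_setOf_eq, inv_one, one_mul] at hv1 hv2 ⊢
    have hmul := hnm_mul v1 v2
    have h4 : (0:ℝ) < 4 * γ ^ 2 := by positivity
    have h1' : nm v1 * (4 * γ ^ 2) < r := (lt_div_iff₀ h4).1 hv1
    have h2' : nm v2 * (4 * γ ^ 2) < r := (lt_div_iff₀ h4).1 hv2
    nlinarith [hnm_nonneg v1, hnm_nonneg v2, mul_pos hγ0 hγ0, mul_pos hγ0 hr]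
  have hcellm : ∀ E ∈ πr r, μ E ≤ m := by
    intro E hE
    obtain ⟨x, hx, hxU, hxV⟩ := hunif E hE
    calc μ E ≤ μ (x • (gball nm 1 (r/(4*γ^2)) * gball nm 1 (r/(4*γ^2)))) := measure_mono hxV
      _ = μ (gball nm 1 (r/(4*γ^2)) * gball nm 1 (r/(4*γ^2))) := MeasureTheory.measure_smul (μ := μ) x _
      _ ≤ μ (gball nm 1 r) := measure_mono hsubUU
      _ = m := hmdef.symm
  set a : Set G → ℝ≥0∞ := fun E => eLpNorm (E.indicator f) q μ with hadef
  have ha' : ∀ E : Set G, eLpNorm (E.indicator f) q μ = a E := fun E => rfl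
  set D := K₁ * c ^ (qq/aa) * m ^ (1 - qq/aa) with hDdef
  have hD0 : D ≠ 0 := by
    rw [hDdef]
    refine mul_ne_zero (mul_ne_zero hK₁0 ?_) ?_
    · simp [ENNReal.rpow_eq_zero_iff, hc0, hct]
    · simp [ENNReal.rpow_eq_zero_iff, hm0, hmt]
  have hDt : D ≠ ∞ := by
    rw [hDdef]
    exact ENNReal.mul_ne_top (ENNReal.mul_ne_top hK₁t
      (ENNReal.rpow_ne_top_of_nonneg hqadiv0 hct))
      (ENNReal.rpow_ne_top_of_nonneg (by linarith) hmt)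
  set A := D ^ (1/qq) with hAdef
  have hA0 : A ≠ 0 := by simp [hAdef, ENNReal.rpow_eq_zero_iff, hD0, hDt]
  have hAt : A ≠ ∞ := ENNReal.rpow_ne_top_of_nonneg h1qq hDt
  have haEint : ∀ E ∈ πr r, a E = (∫⁻ x in E, (‖f x‖₊ : ℝ≥0∞) ^ qq ∂μ) ^ (1/qq) := by
    intro E hE
    rw [← ha' E, eLpNorm_indicator_eq_eLpNorm_restrict (hmeas E hE),
      eLpNorm_eq_lintegral_rpow_enorm_toReal hq0 hqt]
    simp only [enorm_eq_nnnorm, ← hqqdef]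
  have haE : ∀ E ∈ πr r, a E ≤ A := by
    intro E hE
    rw [haEint E hE, hAdef, hDdef]
    exact ENNReal.rpow_le_rpow
      (aux_core μ f hfm qq aa hqq0 hqa c hc0 hct hDist E m (hcellm E hE) hmt) h1qq
  have hAkeyD : m ^ (aa⁻¹ - qq⁻¹) * D ^ (1/qq) = K₁ ^ (1/qq) * W := by
    rw [hDdef, ENNReal.mul_rpow_of_nonneg _ _ h1qq, ENNReal.mul_rpow_of_nonneg _ _ h1qq,
      ← ENNReal.rpow_mul c, ← ENNReal.rpow_mul m]
    have e1 : qq/aa * (1/qq) = 1/aa := by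
      rw [div_mul_div_comm, mul_one, mul_comm aa qq, ← div_div, div_self hqq0.ne']
    have e2 : (1 - qq/aa) * (1/qq) = qq⁻¹ - aa⁻¹ := by
      rw [sub_mul, one_mul, e1, one_div, one_div]
    have e3 : c ^ (1/aa) = W := by
      rw [hcdef, ← ENNReal.rpow_mul, mul_one_div_cancel haa0.ne', ENNReal.rpow_one]
    rw [e1, e2, e3]
    calc m ^ (aa⁻¹ - qq⁻¹) * (K₁ ^ (1/qq) * W * m ^ (qq⁻¹ - aa⁻¹))
        = K₁ ^ (1/qq) * W * (m ^ (aa⁻¹ - qq⁻¹) * m ^ (qq⁻¹ - aa⁻¹)) := by ring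
      _ = K₁ ^ (1/qq) * W := by
          rw [← ENNReal.rpow_add _ _ hm0 hmt,
            show (aa⁻¹ - qq⁻¹) + (qq⁻¹ - aa⁻¹) = 0 by ring, ENNReal.rpow_zero, mul_one]
  have hexp : α⁻¹.toReal - q⁻¹.toReal = aa⁻¹ - qq⁻¹ := by rw [hainv, hqinv]
  rw [hexp]
  by_cases hpt : p = ∞
  · simp only [partNorm]
    rw [if_pos hpt]
    calc m ^ (aa⁻¹ - qq⁻¹) * ⨆ E ∈ πr r, eLpNorm (E.indicator f) q μ
        ≤ m ^ (aa⁻¹ - qq⁻¹) * A := by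
          refine mul_le_mul_right (iSup_le fun E => iSup_le fun hE => ?_) _
          rw [ha' E]
          exact haE E hE
      _ = K₁ ^ (1/qq) * W := hAkeyD
      _ ≤ CC * W := by
          refine mul_le_mul_left ?_ _
          rw [hCCdef, if_pos hpt]
  · -- p finite
    have hppa : aa < pp := (ENNReal.toReal_lt_toReal hαt hpt).2 hαp
    have hpp0 : (0:ℝ) < pp := haa0.trans hppa
    have h1pp : (0:ℝ) ≤ 1/pp := (one_div_pos.2 hpp0).le
    have h2i0 : ((2:ℝ≥0∞))⁻¹ ≠ 0 := ENNReal.inv_ne_zero.2 (by norm_num)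
    have h2it : ((2:ℝ≥0∞))⁻¹ ≠ ∞ := ENNReal.inv_ne_top.2 (by norm_num)
    have hcount : ∀ s : ℝ≥0∞, s ≠ 0 → s ≠ ∞ → ∀ F : Finset (Set G), ↑F ⊆ πr r →
        (∀ E ∈ F, s < a E) → (F.card : ℝ≥0∞) ≤ D ^ (aa/qq) * s ^ (-aa) := by
      intro s hs0 hst F hFsub hFlt
      rcases Nat.eq_zero_or_pos F.card with h0 | hpos
      · simp [h0]
      have hn0 : (F.card : ℝ≥0∞) ≠ 0 := Nat.cast_ne_zero.2 hpos.ne'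
      have hnt : (F.card : ℝ≥0∞) ≠ ∞ := ENNReal.natCast_ne_top _
      have step1 : (F.card : ℝ≥0∞) * s ^ qq
          ≤ ∫⁻ x in ⋃ E ∈ F, id E, (‖f x‖₊ : ℝ≥0∞) ^ qq ∂μ := by
        rw [lintegral_biUnion_finset (hdisj.subset hFsub) (fun E hE => hmeas E (hFsub hE))]
        calc (F.card : ℝ≥0∞) * s ^ qq = ∑ _E ∈ F, s ^ qq := by
              rw [Finset.sum_const, nsmul_eq_mul]
          _ ≤ ∑ E ∈ F, ∫⁻ x in id E, (‖f x‖₊ : ℝ≥0∞) ^ qq ∂μ := by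
              refine Finset.sum_le_sum fun E hE => ?_
              have h2 : s ^ qq ≤ a E ^ qq :=
                ENNReal.rpow_le_rpow (hFlt E hE).le hqq0.le
              rwa [haEint E (hFsub hE), ← ENNReal.rpow_mul,
                one_div, inv_mul_cancel₀ hqq0.ne', ENNReal.rpow_one] at h2
      have step2 : ∫⁻ x in ⋃ E ∈ F, id E, (‖f x‖₊ : ℝ≥0∞) ^ qq ∂μ
          ≤ K₁ * c ^ (qq/aa) * ((F.card : ℝ≥0∞) * m) ^ (1 - qq/aa) := by
        refine aux_core μ f hfm qq aa hqq0 hqa c hc0 hct hDist _ _ ?_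
          (ENNReal.mul_ne_top hnt hmt)
        refine le_trans (measure_biUnion_finset_le F _) ?_
        calc ∑ E ∈ F, μ (id E) ≤ ∑ _E ∈ F, m :=
              Finset.sum_le_sum fun E hE => hcellm E (hFsub hE)
          _ = (F.card : ℝ≥0∞) * m := by rw [Finset.sum_const, nsmul_eq_mul]
      have step3 : (F.card : ℝ≥0∞) * s ^ qq ≤ D * (F.card : ℝ≥0∞) ^ (1 - qq/aa) := by
        refine le_trans step1 (le_trans step2 ?_)
        rw [ENNReal.mul_rpow_of_nonneg _ _ (by linarith : (0:ℝ) ≤ 1 - qq/aa), hDdef]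
        exact le_of_eq (by ring)
      have hsqq0 : s ^ qq ≠ 0 := by simp [ENNReal.rpow_eq_zero_iff, hs0, hst]
      have hsqqt : s ^ qq ≠ ∞ := ENNReal.rpow_ne_top_of_nonneg hqq0.le hst
      have hne : (F.card : ℝ≥0∞) ^ (1 - qq/aa) ≠ 0 := by
        simp [ENNReal.rpow_eq_zero_iff, hn0, hnt]
      have hne' : (F.card : ℝ≥0∞) ^ (1 - qq/aa) ≠ ∞ :=
        ENNReal.rpow_ne_top_of_nonneg (by linarith) hnt
      have step4 : (F.card : ℝ≥0∞) ^ (qq/aa) * s ^ qq ≤ D := by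
        have hsplit : (F.card : ℝ≥0∞)
            = (F.card : ℝ≥0∞) ^ (1 - qq/aa) * (F.card : ℝ≥0∞) ^ (qq/aa) := by
          rw [← ENNReal.rpow_add _ _ hn0 hnt]
          norm_num
        have h' : (F.card : ℝ≥0∞) ^ (1 - qq/aa) * ((F.card : ℝ≥0∞) ^ (qq/aa) * s ^ qq)
            ≤ (F.card : ℝ≥0∞) ^ (1 - qq/aa) * D := by
          calc (F.card : ℝ≥0∞) ^ (1 - qq/aa) * ((F.card : ℝ≥0∞) ^ (qq/aa) * s ^ qq)
              = ((F.card : ℝ≥0∞) ^ (1 - qq/aa) * (F.card : ℝ≥0∞) ^ (qq/aa)) * s ^ qq := by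
                ring
            _ ≤ D * (F.card : ℝ≥0∞) ^ (1 - qq/aa) := by rw [← hsplit]; exact step3
            _ = (F.card : ℝ≥0∞) ^ (1 - qq/aa) * D := by ring
        exact (ENNReal.mul_le_mul_iff_right hne hne').1 h'
      have step5 : (F.card : ℝ≥0∞) ^ (qq/aa) ≤ D / s ^ qq :=
        (ENNReal.le_div_iff_mul_le (Or.inl hsqq0) (Or.inl hsqqt)).2 step4
      calc (F.card : ℝ≥0∞) = ((F.card : ℝ≥0∞) ^ (qq/aa)) ^ (aa/qq) := by
            rw [← ENNReal.rpow_mul, show qq/aa * (aa/qq) = 1 by field_simp, ENNReal.rpow_one]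
        _ ≤ (D / s ^ qq) ^ (aa/qq) := ENNReal.rpow_le_rpow step5 haqdiv0
        _ = D ^ (aa/qq) * s ^ (-aa) := by
            rw [ENNReal.div_rpow_of_nonneg _ _ haqdiv0, ← ENNReal.rpow_mul,
              show qq * (aa/qq) = aa by field_simp, div_eq_mul_inv, ← ENNReal.rpow_neg]
    -- dyadic decomposition
    have hexj : ∀ E : Set G, a E ≠ 0 → ∃ j : ℕ, A * 2⁻¹ ^ j < a E := by
      intro E haE0
      have hdiv : a E / A ≠ 0 := by
        simp [ENNReal.div_eq_zero_iff, haE0, hAt]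
      obtain ⟨j, hj⟩ := ENNReal.exists_inv_two_pow_lt hdiv
      refine ⟨j, ?_⟩
      have h' := (ENNReal.mul_lt_mul_iff_left hA0 hAt).2 hj
      rwa [ENNReal.div_mul_cancel hA0 hAt, mul_comm] at h'
    set jfun : Set G → ℕ :=
      fun E => if h : a E ≠ 0 then Nat.find (hexj E h) else 0 with hjfun
    have hjlt : ∀ E : Set G, a E ≠ 0 → A * 2⁻¹ ^ (jfun E) < a E := by
      intro E h
      rw [hjfun]
      simp only
      rw [dif_pos h]
      exact Nat.find_spec (hexj E h)
    have hjle : ∀ E ∈ πr r, a E ≠ 0 → a E ≤ 2 * (A * 2⁻¹ ^ (jfun E)) := by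
      intro E hE h
      rw [hjfun]
      simp only
      rw [dif_pos h]
      rcases Nat.eq_zero_or_eq_succ_pred (Nat.find (hexj E h)) with h0 | hsucc
      · rw [h0, pow_zero, mul_one]
        exact le_trans (haE E hE) (le_mul_of_one_le_left (zero_le) one_le_two)
      · set k := (Nat.find (hexj E h)).pred with hk
        have hmin : ¬ (A * 2⁻¹ ^ k < a E) :=
          Nat.find_min (hexj E h) (by rw [hsucc]; exact Nat.lt_succ_self k)
        refine le_trans (not_lt.1 hmin) (le_of_eq ?_)
        rw [hsucc, pow_succ]
        calc A * 2⁻¹ ^ k = 1 * (A * 2⁻¹ ^ k) := (one_mul _).symm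
          _ = (2 * 2⁻¹) * (A * 2⁻¹ ^ k) := by
              rw [ENNReal.mul_inv_cancel two_ne_zero ENNReal.ofNat_ne_top]
          _ = 2 * (A * (2⁻¹ ^ k * 2⁻¹)) := by ring
    have hsjpow : ∀ (j : ℕ) (e : ℝ),
        (A * 2⁻¹ ^ j) ^ e = D ^ (e/qq) * (2:ℝ≥0∞)⁻¹ ^ ((j:ℝ) * e) := by
      intro j e
      rw [ENNReal.mul_rpow_of_ne_zero hA0 (pow_ne_zero j h2i0), hAdef,
        ← ENNReal.rpow_mul D, ← ENNReal.rpow_natCast (2:ℝ≥0∞)⁻¹ j, ← ENNReal.rpow_mul,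
        show 1/qq * e = e/qq by ring]
    have hterm : ∀ j : ℕ, D ^ (aa/qq) * (A * 2⁻¹ ^ j) ^ (-aa) * (2 * (A * 2⁻¹ ^ j)) ^ pp
        = (2 ^ pp * D ^ (pp/qq)) * u ^ j := by
      intro j
      rw [ENNReal.mul_rpow_of_nonneg 2 _ hpp0.le, hsjpow j (-aa), hsjpow j pp,
        hudef, ← ENNReal.rpow_natCast ((2:ℝ≥0∞)⁻¹ ^ (pp - aa)) j, ← ENNReal.rpow_mul]
      calc D ^ (aa/qq) * (D ^ (-aa/qq) * (2:ℝ≥0∞)⁻¹ ^ ((j:ℝ) * -aa))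
            * (2 ^ pp * (D ^ (pp/qq) * (2:ℝ≥0∞)⁻¹ ^ ((j:ℝ) * pp)))
          = 2 ^ pp * (D ^ (aa/qq) * D ^ (-aa/qq) * D ^ (pp/qq))
            * ((2:ℝ≥0∞)⁻¹ ^ ((j:ℝ) * -aa) * (2:ℝ≥0∞)⁻¹ ^ ((j:ℝ) * pp)) := by ring
        _ = 2 ^ pp * D ^ (pp/qq) * (2:ℝ≥0∞)⁻¹ ^ ((pp - aa) * (j:ℝ)) := by
            rw [← ENNReal.rpow_add _ _ hD0 hDt, ← ENNReal.rpow_add _ _ hD0 hDt,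
              ← ENNReal.rpow_add _ _ h2i0 h2it,
              show aa/qq + -aa/qq + pp/qq = pp/qq by ring,
              show (j:ℝ) * -aa + (j:ℝ) * pp = (pp - aa) * (j:ℝ) by ring]
    have hsum : (∑' E : ↥(πr r), a ↑E ^ pp) ≤ 2 ^ pp * D ^ (pp/qq) * (1 - u)⁻¹ := by
      rw [ENNReal.tsum_eq_iSup_sum]
      refine iSup_le fun F => ?_
      have hzf : ∀ x ∈ F, a (↑x : Set G) ^ pp ≠ 0 → a (↑x : Set G) ≠ 0 := fun x _ hne h0 =>
        hne (by rw [h0, ENNReal.zero_rpow_of_pos hpp0])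
      rw [← Finset.sum_filter_of_ne hzf]
      set F₀ := F.filter (fun x : ↥(πr r) => a (↑x : Set G) ≠ 0) with hF₀def
      have hmemF₀ : ∀ x ∈ F₀, a (↑x : Set G) ≠ 0 := fun x hx => (Finset.mem_filter.1 hx).2
      set g : ↥(πr r) → ℕ := fun x => jfun (↑x : Set G) with hgdef
      rw [← Finset.sum_fiberwise_of_maps_to (g := g) (t := F₀.image g)
        (fun x hx => Finset.mem_image_of_mem g hx)
        (fun x => a (↑x : Set G) ^ pp)]
      refine le_trans (Finset.sum_le_sum
        (g := fun j => (2 ^ pp * D ^ (pp/qq)) * u ^ j) fun j _ => ?_)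
        (le_trans (ENNReal.sum_le_tsum _) ?_)
      · set Fj := F₀.filter (fun x : ↥(πr r) => g x = j) with hFjdef
        have hmem : ∀ x ∈ Fj, a (↑x : Set G) ≠ 0 ∧ jfun (↑x : Set G) = j := by
          intro x hx
          have h1 := Finset.mem_filter.1 hx
          exact ⟨hmemF₀ x h1.1, h1.2⟩
        have hsj0 : A * 2⁻¹ ^ j ≠ 0 := mul_ne_zero hA0 (pow_ne_zero j h2i0)
        have hsjt : A * 2⁻¹ ^ j ≠ ∞ := ENNReal.mul_ne_top hAt (ENNReal.pow_ne_top h2it)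
        have hcard : (Fj.card : ℝ≥0∞) ≤ D ^ (aa/qq) * (A * 2⁻¹ ^ j) ^ (-aa) := by
          have himg := hcount (A * 2⁻¹ ^ j) hsj0 hsjt (Fj.image Subtype.val)
            (fun E hE => by
              obtain ⟨x, hx, rfl⟩ := Finset.mem_image.1 (Finset.mem_coe.1 hE)
              exact x.2)
            (fun E hE => by
              obtain ⟨x, hx, rfl⟩ := Finset.mem_image.1 hE
              have h' := hjlt ↑x (hmem x hx).1
              rwa [(hmem x hx).2] at h')
          rwa [Finset.card_image_of_injective _ Subtype.val_injective] at himg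
        calc ∑ x ∈ Fj, a (↑x : Set G) ^ pp
            ≤ ∑ _x ∈ Fj, (2 * (A * 2⁻¹ ^ j)) ^ pp := by
              refine Finset.sum_le_sum fun x hx => ?_
              have h2 := hjle ↑x x.2 (hmem x hx).1
              rw [(hmem x hx).2] at h2
              exact ENNReal.rpow_le_rpow h2 hpp0.le
          _ = (Fj.card : ℝ≥0∞) * (2 * (A * 2⁻¹ ^ j)) ^ pp := by
              rw [Finset.sum_const, nsmul_eq_mul]
          _ ≤ (D ^ (aa/qq) * (A * 2⁻¹ ^ j) ^ (-aa)) * (2 * (A * 2⁻¹ ^ j)) ^ pp :=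
              mul_le_mul_left hcard _
          _ = (2 ^ pp * D ^ (pp/qq)) * u ^ j := hterm j
      · rw [ENNReal.tsum_mul_left, ENNReal.tsum_geometric]
    simp only [partNorm]
    rw [if_neg hpt, ← hppdef]
    simp only [ha']
    have hfinal : (∑' E : ↥(πr r), a ↑E ^ pp) ^ (1/pp)
        ≤ 2 * ((1 - u)⁻¹) ^ (1/pp) * D ^ (1/qq) := by
      refine le_trans (ENNReal.rpow_le_rpow hsum h1pp) (le_of_eq ?_)
      rw [ENNReal.mul_rpow_of_nonneg _ _ h1pp, ENNReal.mul_rpow_of_nonneg _ _ h1pp,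
        ← ENNReal.rpow_mul 2, ← ENNReal.rpow_mul D,
        mul_one_div_cancel hpp0.ne',
        show pp/qq * (1/pp) = 1/qq by
          rw [div_mul_div_comm, mul_one, mul_comm qq pp, ← div_div, div_self hpp0.ne'],
        ENNReal.rpow_one]
      ring
    calc m ^ (aa⁻¹ - qq⁻¹) * (∑' E : ↥(πr r), a ↑E ^ pp) ^ (1/pp)
        ≤ m ^ (aa⁻¹ - qq⁻¹) * (2 * ((1 - u)⁻¹) ^ (1/pp) * D ^ (1/qq)) :=
          mul_le_mul_right hfinal _
      _ = (2 * ((1 - u)⁻¹) ^ (1/pp)) * (m ^ (aa⁻¹ - qq⁻¹) * D ^ (1/qq)) := by ring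
      _ = (2 * ((1 - u)⁻¹) ^ (1/pp)) * (K₁ ^ (1/qq) * W) := by rw [hAkeyD]
      _ = CC * W := by rw [hCCdef, if_neg hpt]; ring
end
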